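/- arXiv:1412.3248 — 7 statements merged into one kernel-verified Lean document; each statement's English description precedes it below -/
import Mathlib

section
/- Let φ : D₂ ⥤ D₁ and ρ : D₁ ⥤ D₂ be functors together with an adjunction φ ⊣ ρ. Let W₂ be a class of morphisms of D₂ and let q₂ : D₂ ⥤ E₂ be a localization functor of D₂ with respect to W₂. Let q₁ : D₁ ⥤ E₁ be a functor admitting a right adjoint r : E₁ ⥤ D₁ which is fully faithful (equivalently, the counit q₁ ∘ r ⟶ Id is an isomorphism). Suppose given a functor φ̄ : E₂ ⥤ E₁ together with a natural isomorphism φ̄ ∘ q₂ ≅ q₁ ∘ φ. Then φ̄ admits a right adjoint, namely the composite functor r ⋙ ρ ⋙ q₂ : E₁ ⥤ E₂. -/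
open CategoryTheory

/-- An adjunction `φ ⊣ ρ` descends along localizations: if `q₂ : D₂ ⥤ E₂` is a localization
functor with respect to a class of morphisms `W₂`, `q₁ : D₁ ⥤ E₁` admits a fully faithful right
adjoint `r`, and `φ̄ : E₂ ⥤ E₁` is a functor with `φ̄ ∘ q₂ ≅ q₁ ∘ φ`, then `φ̄` admits a right
adjoint, namely `r ⋙ ρ ⋙ q₂`. -/
theorem adjunction_descends_to_localization
    {D₁ : Type*} [Category D₁] {D₂ : Type*} [Category D₂]
    {E₁ : Type*} [Category E₁] {E₂ : Type*} [Category E₂]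
    (φ : D₂ ⥤ D₁) (ρ : D₁ ⥤ D₂) (adj : φ ⊣ ρ)
    (W₂ : MorphismProperty D₂) (q₂ : D₂ ⥤ E₂) [q₂.IsLocalization W₂]
    (q₁ : D₁ ⥤ E₁) (r : E₁ ⥤ D₁) (adj₁ : q₁ ⊣ r) [r.Full] [r.Faithful]
    (φbar : E₂ ⥤ E₁) (iso : q₂ ⋙ φbar ≅ φ ⋙ q₁) :
    Nonempty (φbar ⊣ r ⋙ ρ ⋙ q₂) := by
  haveI : q₁.IsLocalization ((MorphismProperty.isomorphisms E₁).inverseImage q₁) :=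
    adj₁.isLocalization
  set R : E₁ ⥤ E₂ := r ⋙ ρ ⋙ q₂ with hR
  letI : Localization.Lifting q₂ W₂ (φ ⋙ q₁ ⋙ R) (φbar ⋙ R) :=
    ⟨Functor.isoWhiskerRight iso R⟩
  let τ : q₂ ⟶ φ ⋙ q₁ ⋙ R :=
    { app := fun X => q₂.map (adj.unit.app X ≫ ρ.map (adj₁.unit.app (φ.obj X)))
      naturality := by
        intro X Y f
        dsimp [R]
        rw [← q₂.map_comp, ← q₂.map_comp]
        congr 1
        have h1 : f ≫ adj.unit.app Y = adj.unit.app X ≫ ρ.map (φ.map f) := by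
          simpa using adj.unit.naturality f
        have h2 : φ.map f ≫ adj₁.unit.app (φ.obj Y) =
            adj₁.unit.app (φ.obj X) ≫ r.map (q₁.map (φ.map f)) := by
          simpa using adj₁.unit.naturality (φ.map f)
        rw [reassoc_of% h1, ← ρ.map_comp, h2, ρ.map_comp, Category.assoc] }
  let η : 𝟭 E₂ ⟶ φbar ⋙ R :=
    Localization.liftNatTrans q₂ W₂ q₂ (φ ⋙ q₁ ⋙ R) (𝟭 E₂) (φbar ⋙ R) τ
  have ηapp : ∀ X : D₂, η.app (q₂.obj X) =
      q₂.map (adj.unit.app X ≫ ρ.map (adj₁.unit.app (φ.obj X))) ≫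
        q₂.map (ρ.map (r.map (iso.inv.app X))) := by
    intro X
    have := Localization.liftNatTrans_app q₂ W₂ q₂ (φ ⋙ q₁ ⋙ R) (𝟭 E₂) (φbar ⋙ R) τ X
    rw [this]
    dsimp [Localization.Lifting.iso, τ]
    simp
    rfl
  let ε : R ⋙ φbar ⟶ 𝟭 E₁ :=
    { app := fun B => iso.hom.app (ρ.obj (r.obj B)) ≫
        q₁.map (adj.counit.app (r.obj B)) ≫ adj₁.counit.app B
      naturality := by
        intro B B' g
        dsimp [R]
        have h1 : φbar.map (q₂.map (ρ.map (r.map g))) ≫ iso.hom.app (ρ.obj (r.obj B')) =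
            iso.hom.app (ρ.obj (r.obj B)) ≫ q₁.map (φ.map (ρ.map (r.map g))) := by
          simpa using iso.hom.naturality (ρ.map (r.map g))
        have h2 : φ.map (ρ.map (r.map g)) ≫ adj.counit.app (r.obj B') =
            adj.counit.app (r.obj B) ≫ r.map g := by
          simpa using adj.counit.naturality (r.map g)
        have h3 : q₁.map (r.map g) ≫ adj₁.counit.app B' = adj₁.counit.app B ≫ g := by
          simpa using adj₁.counit.naturality g
        rw [reassoc_of% h1, ← q₁.map_comp_assoc, h2, q₁.map_comp_assoc, h3]
        simp }
  have left : ∀ A : E₂, φbar.map (η.app A) ≫ ε.app (φbar.obj A) = 𝟙 (φbar.obj A) := by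
    intro A
    let T : φbar ⟶ φbar := φbar.leftUnitor.inv ≫ Functor.whiskerRight η φbar ≫
      (Functor.associator φbar R φbar).hom ≫ Functor.whiskerLeft φbar ε ≫ φbar.rightUnitor.hom
    have Tapp : ∀ A, T.app A = φbar.map (η.app A) ≫ ε.app (φbar.obj A) := by
      intro A; simp [T]
    have hT : T = 𝟙 φbar := by
      apply Localization.natTrans_ext q₂ W₂
      intro X
      rw [Tapp (q₂.obj X), NatTrans.id_app, ηapp X]
      dsimp [ε, R]
      rw [φbar.map_comp]
      have h1 : φbar.map (q₂.map (ρ.map (r.map (iso.inv.app X)))) ≫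
          iso.hom.app (ρ.obj (r.obj (φbar.obj (q₂.obj X)))) =
          iso.hom.app (ρ.obj (r.obj (q₁.obj (φ.obj X)))) ≫
            q₁.map (φ.map (ρ.map (r.map (iso.inv.app X)))) := by
        simpa using iso.hom.naturality (ρ.map (r.map (iso.inv.app X)))
      have h2 : φbar.map (q₂.map (adj.unit.app X ≫ ρ.map (adj₁.unit.app (φ.obj X)))) ≫
          iso.hom.app (ρ.obj (r.obj (q₁.obj (φ.obj X)))) =
          iso.hom.app X ≫ q₁.map (φ.map (adj.unit.app X ≫ ρ.map (adj₁.unit.app (φ.obj X)))) := by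
        simpa using iso.hom.naturality (adj.unit.app X ≫ ρ.map (adj₁.unit.app (φ.obj X)))
      rw [Category.assoc, reassoc_of% h1, reassoc_of% h2]
      simp only [Functor.map_comp, Category.assoc]
      have h3 : φ.map (ρ.map (r.map (iso.inv.app X))) ≫
          adj.counit.app (r.obj (φbar.obj (q₂.obj X))) =
          adj.counit.app (r.obj (q₁.obj (φ.obj X))) ≫ r.map (iso.inv.app X) := by
        simpa using adj.counit.naturality (r.map (iso.inv.app X))
      have h3' : q₁.map (φ.map (ρ.map (r.map (iso.inv.app X)))) ≫
          q₁.map (adj.counit.app (r.obj (φbar.obj (q₂.obj X)))) =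
          q₁.map (adj.counit.app (r.obj (q₁.obj (φ.obj X)))) ≫ q₁.map (r.map (iso.inv.app X)) := by
        rw [← q₁.map_comp, h3, q₁.map_comp]
      rw [reassoc_of% h3']
      have h6 : φ.map (ρ.map (adj₁.unit.app (φ.obj X))) ≫
          adj.counit.app (r.obj (q₁.obj (φ.obj X))) =
          adj.counit.app (φ.obj X) ≫ adj₁.unit.app (φ.obj X) := by
        simpa using adj.counit.naturality (adj₁.unit.app (φ.obj X))
      have h6' : q₁.map (φ.map (ρ.map (adj₁.unit.app (φ.obj X)))) ≫
          q₁.map (adj.counit.app (r.obj (q₁.obj (φ.obj X)))) =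
          q₁.map (adj.counit.app (φ.obj X)) ≫ q₁.map (adj₁.unit.app (φ.obj X)) := by
        rw [← q₁.map_comp, h6, q₁.map_comp]
      rw [reassoc_of% h6']
      have h7 : q₁.map (φ.map (adj.unit.app X)) ≫ q₁.map (adj.counit.app (φ.obj X)) =
          𝟙 (q₁.obj (φ.obj X)) := by
        rw [← q₁.map_comp]; simp [adj.left_triangle_components]
      rw [reassoc_of% h7]
      have h4 : q₁.map (r.map (iso.inv.app X)) ≫ adj₁.counit.app (φbar.obj (q₂.obj X)) =
          adj₁.counit.app (q₁.obj (φ.obj X)) ≫ iso.inv.app X := by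
        simpa using adj₁.counit.naturality (iso.inv.app X)
      rw [h4]
      have h8 : q₁.map (adj₁.unit.app (φ.obj X)) ≫ adj₁.counit.app (q₁.obj (φ.obj X)) =
          𝟙 (q₁.obj (φ.obj X)) := adj₁.left_triangle_components (φ.obj X)
      rw [reassoc_of% h8]
      simp
    simpa [Tapp] using congr_arg (fun t => NatTrans.app t A) hT
  have right : ∀ B : E₁, η.app (R.obj B) ≫ R.map (ε.app B) = 𝟙 (R.obj B) := by
    intro B
    let T : R ⟶ R := R.rightUnitor.inv ≫ Functor.whiskerLeft R η ≫
      (Functor.associator R φbar R).inv ≫ Functor.whiskerRight ε R ≫ R.leftUnitor.hom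
    have Tapp : ∀ B, T.app B = η.app (R.obj B) ≫ R.map (ε.app B) := by
      intro B; simp [T]
    have hT : T = 𝟙 R := by
      apply Localization.natTrans_ext q₁ ((MorphismProperty.isomorphisms E₁).inverseImage q₁)
      intro Y
      rw [Tapp (q₁.obj Y), NatTrans.id_app]
      show η.app (q₂.obj (ρ.obj (r.obj (q₁.obj Y)))) ≫ _ = _
      rw [ηapp (ρ.obj (r.obj (q₁.obj Y)))]
      dsimp [ε, R]
      simp only [Functor.map_comp, Category.assoc]
      have c1 : q₂.map (ρ.map (r.map (iso.inv.app (ρ.obj (r.obj (q₁.obj Y)))))) ≫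
          q₂.map (ρ.map (r.map (iso.hom.app (ρ.obj (r.obj (q₁.obj Y)))))) =
          𝟙 _ := by
        rw [← q₂.map_comp, ← ρ.map_comp, ← r.map_comp, iso.inv_hom_id_app]
        simp
      rw [reassoc_of% c1]
      have h1 : adj₁.unit.app (φ.obj (ρ.obj (r.obj (q₁.obj Y)))) ≫
          r.map (q₁.map (adj.counit.app (r.obj (q₁.obj Y)))) =
          adj.counit.app (r.obj (q₁.obj Y)) ≫ adj₁.unit.app (r.obj (q₁.obj Y)) := by
        simpa using (adj₁.unit.naturality (adj.counit.app (r.obj (q₁.obj Y)))).symm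
      have h1' : q₂.map (ρ.map (adj₁.unit.app (φ.obj (ρ.obj (r.obj (q₁.obj Y)))))) ≫
          q₂.map (ρ.map (r.map (q₁.map (adj.counit.app (r.obj (q₁.obj Y)))))) =
          q₂.map (ρ.map (adj.counit.app (r.obj (q₁.obj Y)))) ≫
            q₂.map (ρ.map (adj₁.unit.app (r.obj (q₁.obj Y)))) := by
        rw [← q₂.map_comp, ← ρ.map_comp, h1, ρ.map_comp, q₂.map_comp]
      rw [reassoc_of% h1']
      have h2 : adj₁.unit.app (r.obj (q₁.obj Y)) ≫ r.map (adj₁.counit.app (q₁.obj Y)) =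
          𝟙 (r.obj (q₁.obj Y)) := adj₁.right_triangle_components (q₁.obj Y)
      have h2' : q₂.map (ρ.map (adj₁.unit.app (r.obj (q₁.obj Y)))) ≫
          q₂.map (ρ.map (r.map (adj₁.counit.app (q₁.obj Y)))) =
          𝟙 (q₂.obj (ρ.obj (r.obj (q₁.obj Y)))) := by
        rw [← q₂.map_comp, ← ρ.map_comp, h2]
        simp
      rw [h2']
      simp only [Category.comp_id]
      have h3 : adj.unit.app (ρ.obj (r.obj (q₁.obj Y))) ≫
          ρ.map (adj.counit.app (r.obj (q₁.obj Y))) = 𝟙 _ :=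
        adj.right_triangle_components (r.obj (q₁.obj Y))
      rw [← q₂.map_comp, h3]
      simp
    simpa [Tapp] using congr_arg (fun t => NatTrans.app t B) hT
  exact ⟨⟨η, ε, left, right⟩⟩
end

section
/- Let G be a group, H ≤ G a subgroup, and K, L ≤ H two subgroups of H. Consider the set P = {(aK, bL) ∈ G⧸K × G⧸L : aH = bH} (the fibered product of the canonical projections G⧸K → G⧸H and G⧸L → G⧸H), with G acting diagonally by left multiplication. Then for any set R ⊆ H of representatives of the double cosets K\H/L, there is a G-equivariant bijection P ≃ Σ_{s ∈ R} G⧸(K ∩ sLs⁻¹), where G acts on each summand G⧸(K ∩ sLs⁻¹) by left multiplication; under this bijection the class of (K, sL) corresponds to the identity coset in the summand indexed by s. -/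
namespace Stmt1

/-- The projection `G ⧸ K → G ⧸ H` for nested subgroups `K ≤ H`. -/
def cosetProj {G : Type*} [Group G] {K H : Subgroup G} (h : K ≤ H) : G ⧸ K → G ⧸ H :=
  Quotient.map' id fun _ _ hab =>
    QuotientGroup.leftRel_apply.mpr (h (QuotientGroup.leftRel_apply.mp hab))

theorem cosetProj_smul {G : Type*} [Group G] {K H : Subgroup G} (h : K ≤ H) (g : G)
    (x : G ⧸ K) : cosetProj h (g • x) = g • cosetProj h x := by
  induction x using Quotient.inductionOn' with
  | h a => rfl

/-- The fibered product of the projections `G ⧸ K → G ⧸ H` and `G ⧸ L → G ⧸ H`. -/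
def FiberedProd {G : Type*} [Group G] (H K L : Subgroup G) (hK : K ≤ H) (hL : L ≤ H) :
    Type _ :=
  {p : (G ⧸ K) × (G ⧸ L) // cosetProj hK p.1 = cosetProj hL p.2}

/-- The diagonal action of `G` on the fibered product. -/
instance {G : Type*} [Group G] (H K L : Subgroup G) (hK : K ≤ H) (hL : L ≤ H) :
    MulAction G (FiberedProd H K L hK hL) where
  smul g p := ⟨(g • p.val.1, g • p.val.2), by
    simp only [cosetProj_smul, p.property]⟩
  one_smul p := Subtype.ext (Prod.ext (one_smul _ _) (one_smul _ _))
  mul_smul g g' p := Subtype.ext (Prod.ext (mul_smul _ _ _) (mul_smul _ _ _))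

/-- The componentwise action of `G` on a sigma type of `G`-sets. -/
instance sigmaMulAction {G : Type*} [Group G] {ι : Type*} (f : ι → Type*)
    [∀ i, MulAction G (f i)] : MulAction G ((i : ι) × f i) where
  smul g x := ⟨x.1, g • x.2⟩
  one_smul x := by
    cases x with
    | mk i y => show Sigma.mk i ((1 : G) • y) = ⟨i, y⟩; rw [one_smul]
  mul_smul g g' x := by
    cases x with
    | mk i y => show Sigma.mk i ((g * g') • y) = ⟨i, g • g' • y⟩; rw [mul_smul]

/-- The double coset formula: for subgroups `K, L ≤ H ≤ G` and a set `R` of representatives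
of the double cosets `K\H/L`, the fibered product of `G ⧸ K` and `G ⧸ L` over `G ⧸ H` is
`G`-equivariantly isomorphic to the disjoint union over `s ∈ R` of the orbits
`G ⧸ (K ∩ sLs⁻¹)`; the class of `(K, sL)` corresponds to the identity coset in the summand
indexed by `s`. -/
theorem fiberedProd_equiv_double_cosets
    (G : Type*) [Group G] (H K L : Subgroup G) (hK : K ≤ H) (hL : L ≤ H)
    (R : Set G) (hR : ∀ s ∈ R, s ∈ H)
    (hrep : ∀ h ∈ H, ∃! s, s ∈ R ∧ ∃ k ∈ K, ∃ l ∈ L, h = k * s * l) :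
    ∃ e : FiberedProd H K L hK hL ≃
        (s : R) × (G ⧸ (K ⊓ Subgroup.map (MulAut.conj (s : G)).toMonoidHom L)),
      (∀ (g : G) (p : FiberedProd H K L hK hL), e (g • p) = g • e p) ∧
      ∀ (s : R) (p : FiberedProd H K L hK hL),
        p.val.1 = ((1 : G) : G ⧸ K) → p.val.2 = (((s : G)) : G ⧸ L) →
          e p = ⟨s, ((1 : G) : G ⧸ (K ⊓ Subgroup.map (MulAut.conj (s : G)).toMonoidHom L))⟩ := by
  classical
  set Q : R → Subgroup G := fun s => K ⊓ Subgroup.map (MulAut.conj (s : G)).toMonoidHom L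
    with hQ
  -- the inverse map
  have memQ : ∀ (s : R) (u : G), u ∈ Q s ↔ u ∈ K ∧ (s : G)⁻¹ * u * (s : G) ∈ L := by
    intro s u
    constructor
    · rintro ⟨h1, l, hl, h2⟩
      refine ⟨h1, ?_⟩
      have : (s : G) * l * (s : G)⁻¹ = u := h2
      have : l = (s : G)⁻¹ * u * (s : G) := by
        rw [← this]; group
      rwa [← this]
    · rintro ⟨h1, h2⟩
      refine ⟨h1, (s : G)⁻¹ * u * (s : G), h2, ?_⟩
      show (s : G) * ((s : G)⁻¹ * u * (s : G)) * (s : G)⁻¹ = u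
      group
  let f : ((s : R) × (G ⧸ Q s)) → FiberedProd H K L hK hL := fun x =>
    Quotient.liftOn' x.2
      (fun g => (⟨((g : G ⧸ K), ((g * (x.1 : G) : G) : G ⧸ L)), by
        show ((g : G) : G ⧸ H) = ((g * (x.1 : G) : G) : G ⧸ H)
        exact (QuotientGroup.eq).mpr (by
          simpa using hR _ x.1.2 )⟩ : FiberedProd H K L hK hL))
      (by
        intro a b hab
        have hab' : a⁻¹ * b ∈ Q x.1 := QuotientGroup.leftRel_apply.mp hab
        obtain ⟨hk, hl⟩ := (memQ x.1 _).mp hab'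
        refine Subtype.ext (Prod.ext ?_ ?_)
        · exact (QuotientGroup.eq).mpr hk
        · refine (QuotientGroup.eq).mpr ?_
          have : (a * (x.1 : G))⁻¹ * (b * (x.1 : G)) =
              (x.1 : G)⁻¹ * (a⁻¹ * b) * (x.1 : G) := by group
          rw [this]; exact hl)
  have f_mk : ∀ (s : R) (g : G), f ⟨s, (g : G ⧸ Q s)⟩ =
      ⟨((g : G ⧸ K), ((g * (s : G) : G) : G ⧸ L)), by
        show ((g : G) : G ⧸ H) = ((g * (s : G) : G) : G ⧸ H)
        exact (QuotientGroup.eq).mpr (by simpa using hR _ s.2)⟩ := fun s g => rfl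
  have finj : Function.Injective f := by
    rintro ⟨s, x⟩ ⟨t, y⟩ h
    induction x using Quotient.inductionOn' with
    | h a =>
    induction y using Quotient.inductionOn' with
    | h b =>
    have h1 : (a : G ⧸ K) = (b : G ⧸ K) := congrArg (fun p => p.val.1) h
    have h2 : ((a * (s : G) : G) : G ⧸ L) = ((b * (t : G) : G) : G ⧸ L) :=
      congrArg (fun p => p.val.2) h
    have hk : a⁻¹ * b ∈ K := (QuotientGroup.eq).mp h1
    have hl : (a * (s : G))⁻¹ * (b * (t : G)) ∈ L := (QuotientGroup.eq).mp h2
    -- t = (a⁻¹b)⁻¹ * s * l with l ∈ L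
    have hst : s = t := by
      have htH : (t : G) ∈ H := hR _ t.2
      obtain ⟨u, ⟨_, _⟩, huniq⟩ := hrep (t : G) htH
      have e1 : (t : G) = u :=
        huniq (t : G) ⟨t.2, 1, one_mem _, 1, one_mem _, by group⟩
      have e2 : (s : G) = u := by
        refine huniq (s : G) ⟨s.2, (a⁻¹ * b)⁻¹, K.inv_mem hk,
          (a * (s : G))⁻¹ * (b * (t : G)), hl, ?_⟩
        group
      exact Subtype.ext (e2.trans e1.symm)
    subst hst
    refine Sigma.ext rfl (heq_of_eq ?_)
    refine Quotient.sound' (QuotientGroup.leftRel_apply.mpr ?_)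
    refine (memQ s _).mpr ⟨hk, ?_⟩
    have : (s : G)⁻¹ * (a⁻¹ * b) * (s : G) = (a * (s : G))⁻¹ * (b * (s : G)) := by group
    rw [this]; exact hl
  have fsurj : Function.Surjective f := by
    rintro ⟨⟨x, y⟩, hxy⟩
    induction x using Quotient.inductionOn' with
    | h a =>
    induction y using Quotient.inductionOn' with
    | h b =>
    have hH : a⁻¹ * b ∈ H := (QuotientGroup.eq).mp hxy
    obtain ⟨s, ⟨hsR, k, hk, l, hl, hekl⟩, _⟩ := hrep (a⁻¹ * b) hH
    refine ⟨⟨⟨s, hsR⟩, ((a * k : G) : G ⧸ Q ⟨s, hsR⟩)⟩, ?_⟩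
    rw [f_mk]
    refine Subtype.ext (Prod.ext ?_ ?_)
    · exact (QuotientGroup.eq).mpr (by simpa using K.inv_mem hk)
    · refine (QuotientGroup.eq).mpr ?_
      have : (a * k * s)⁻¹ * b = l := by
        have : b = a * (k * s * l) := by rw [← hekl]; group
        rw [this]; group
      rw [this]; exact hl
  let e := (Equiv.ofBijective f ⟨finj, fsurj⟩).symm
  have hef : ∀ x, e (f x) = x := fun x => (Equiv.ofBijective f ⟨finj, fsurj⟩).symm_apply_apply x
  have hfe : ∀ p, f (e p) = p := fun p => (Equiv.ofBijective f ⟨finj, fsurj⟩).apply_symm_apply p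
  have fsmul : ∀ (g : G) (x : (s : R) × (G ⧸ Q s)), f (g • x) = g • f x := by
    rintro g ⟨s, x⟩
    induction x using Quotient.inductionOn' with
    | h a =>
    show f ⟨s, ((g * a : G) : G ⧸ Q s)⟩ = g • f ⟨s, (a : G ⧸ Q s)⟩
    rw [f_mk, f_mk]
    refine Subtype.ext (Prod.ext rfl ?_)
    show ((g * a * (s : G) : G) : G ⧸ L) = ((g * (a * (s : G)) : G) : G ⧸ L)
    rw [mul_assoc]
  refine ⟨e, ?_, ?_⟩
  · intro g p
    apply finj
    rw [hfe, fsmul, hfe]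
  · intro s p h1 h2
    have : p = f ⟨s, ((1 : G) : G ⧸ Q s)⟩ := by
      rw [f_mk]
      refine Subtype.ext (Prod.ext ?_ ?_)
      · exact h1
      · rw [h2]; norm_num
    rw [this, hef]

end Stmt1
end

section
/- Let G be a group and H ≤ G a subgroup. Then the over (slice) category of the category of G-sets and G-equivariant maps over the object G⧸H is equivalent to the category of H-sets and H-equivariant maps. One direction of the equivalence sends an object p : S → G⧸H to the fiber p⁻¹(H) over the identity coset, with its natural H-action; the inverse equivalence sends an H-set T to the induced G-set G ×_H T with its canonical G-map to G⧸H induced by the projection (g, t) ↦ gH. -/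
open CategoryTheory

universe u

namespace Stmt10

variable {G : Type u} [Group G] {H : Subgroup G}

/-- The coset space `G ⧸ H` as an object of the category of `G`-sets. -/
def cosetObj (G : Type u) [Group G] (H : Subgroup G) : Action (Type u) (MonCat.of G) :=
  Action.ofMulAction G (G ⧸ H)

/-- The fiber over the identity coset of a `G`-map `p : S → G ⧸ H`. -/
def FiberT (p : Over (cosetObj G H)) : Type u :=
  {s : p.left.V // p.hom.hom s = ((1 : G) : G ⧸ H)}

instance (p : Over (cosetObj G H)) : SMul H (FiberT p) :=
  ⟨fun h s => ⟨p.left.ρ (h : G) s.val, by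
    have hc := types_congr_hom (p.hom.comm (h : G)) s.val
    simp only [types_comp_apply] at hc
    rw [s.property] at hc
    refine hc.trans ?_
    show (Action.ofMulAction G (G ⧸ H)).ρ (h : G) ((1 : G) : G ⧸ H) = ((1 : G) : G ⧸ H)
    rw [Action.ofMulAction_apply, MulAction.Quotient.smul_coe, smul_eq_mul, mul_one]
    exact QuotientGroup.eq.mpr (by simp [h.property])⟩⟩

/-- The natural `H`-action on the fiber of `p : S → G ⧸ H` over the identity coset. -/
instance fiberMulAction (p : Over (cosetObj G H)) : MulAction H (FiberT p) where
  one_smul s := Subtype.ext (by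
    show p.left.ρ ((1 : H) : G) s.val = s.val
    rw [OneMemClass.coe_one, Action.ρ_one]
    rfl)
  mul_smul h h' s := Subtype.ext (by
    show p.left.ρ ((h * h' : H) : G) s.val = p.left.ρ (h : G) (p.left.ρ (h' : G) s.val)
    rw [Subgroup.coe_mul, map_mul]
    rfl)

/-- The fiber functor: it sends a `G`-set over `G ⧸ H` to its fiber over the identity coset,
with its natural `H`-action. -/
def fiberFunctor (G : Type u) [Group G] (H : Subgroup G) :
    Over (cosetObj G H) ⥤ Action (Type u) (MonCat.of H) where
  obj p := Action.ofMulAction H (FiberT p)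
  map {p q} u :=
    { hom := TypeCat.ofHom fun s => ⟨u.left.hom s.val, by
        have h1 : u.left.hom ≫ q.hom.hom = p.hom.hom := by
          rw [← Action.comp_hom, Over.w u]
        have := types_congr_hom h1 s.val
        simp only [types_comp_apply] at this
        rw [this, s.property]⟩
      comm := fun h => by
        ext s
        apply Subtype.ext
        show u.left.hom (p.left.ρ ((id h : ↥H) : G) s.val)
          = q.left.ρ ((id h : ↥H) : G) (u.left.hom s.val)
        have := types_congr_hom (u.left.comm ((id h : ↥H) : G)) s.val
        simpa only [types_comp_apply] using this }
  map_id p := by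
    ext s
    rfl
  map_comp {p q r} u v := by
    ext s
    rfl


section Helpers

/-- The structure map of a `G`-set over `G ⧸ H`, with its codomain unfolded. -/
def cosetMap (p : Over (cosetObj G H)) : p.left.V → G ⧸ H := p.hom.hom

lemma fiber_prop (p : Over (cosetObj G H)) (x : FiberT p) :
    cosetMap p x.val = ((1 : G) : G ⧸ H) := x.property

lemma hom_rho (p : Over (cosetObj G H)) (g : G) (s : p.left.V) :
    cosetMap p (p.left.ρ g s) = g • cosetMap p s := by
  exact types_congr_hom (p.hom.comm g) s

lemma rho_rho (p : Over (cosetObj G H)) (g g' : G) (s : p.left.V) :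
    p.left.ρ g (p.left.ρ g' s) = p.left.ρ (g * g') s := by
  rw [map_mul]; rfl

lemma rho_one (p : Over (cosetObj G H)) (s : p.left.V) : p.left.ρ (1 : G) s = s := by
  rw [map_one]; rfl

lemma fiber_smul_val (p : Over (cosetObj G H)) (h : H) (x : FiberT p) :
    (h • x).val = p.left.ρ (h : G) x.val := rfl

lemma smul_out (g : G) (q : G ⧸ H) : g • q = ((g * q.out : G) : G ⧸ H) := by
  conv_lhs => rw [← QuotientGroup.out_eq' q]
  rw [MulAction.Quotient.smul_coe, smul_eq_mul]

/-- Move `s` into the fiber using the chosen representative of its coset. -/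
noncomputable def toFiber (p : Over (cosetObj G H)) (s : p.left.V) : FiberT p :=
  ⟨p.left.ρ ((cosetMap p s).out)⁻¹ s, by
    show cosetMap p _ = _
    rw [hom_rho, smul_out, inv_mul_cancel]⟩

lemma toFiber_val (p : Over (cosetObj G H)) (s : p.left.V) :
    (toFiber p s).val = p.left.ρ ((cosetMap p s).out)⁻¹ s := rfl

lemma u_fiber_eq {p q : Over (cosetObj G H)} (u : p ⟶ q) (x : FiberT p) :
    (((fiberFunctor G H).map u).hom x).val = u.left.hom x.val := rfl

lemma u_comm {p q : Over (cosetObj G H)} (u : p ⟶ q) (g : G) (s : p.left.V) :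
    u.left.hom (p.left.ρ g s) = q.left.ρ g (u.left.hom s) :=
  types_congr_hom (u.left.comm g) s

instance fiberFaithful : (fiberFunctor G H).Faithful where
  map_injective {p q} {u v} huv := by
    apply Over.OverMorphism.ext
    apply Action.hom_ext
    ext s
    have hfib : u.left.hom (toFiber p s).val = v.left.hom (toFiber p s).val := by
      rw [← u_fiber_eq u, ← u_fiber_eq v, huv]
    rw [toFiber_val] at hfib
    set g : G := (cosetMap p s).out with hg
    have hret : p.left.ρ g (p.left.ρ g⁻¹ s) = s := by
      rw [rho_rho, mul_inv_cancel, rho_one]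
    calc u.left.hom s = u.left.hom (p.left.ρ g (p.left.ρ g⁻¹ s)) := by rw [hret]
      _ = q.left.ρ g (u.left.hom (p.left.ρ g⁻¹ s)) := u_comm u g _
      _ = q.left.ρ g (v.left.hom (p.left.ρ g⁻¹ s)) := by rw [hfib]
      _ = v.left.hom (p.left.ρ g (p.left.ρ g⁻¹ s)) := (u_comm v g _).symm
      _ = v.left.hom s := by rw [hret]

/-- The underlying map of a morphism of fibers. -/
def fiberMap {p q : Over (cosetObj G H)}
    (f : (fiberFunctor G H).obj p ⟶ (fiberFunctor G H).obj q) : FiberT p → FiberT q := fun x => f.hom x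

lemma f_comm {p q : Over (cosetObj G H)}
    (f : (fiberFunctor G H).obj p ⟶ (fiberFunctor G H).obj q) (h : H) (x : FiberT p) :
    fiberMap f (h • x) = h • fiberMap f x :=
  types_congr_hom (f.comm h) x

lemma out_smul_mem {p : Over (cosetObj G H)} (g₀ : G) (s : p.left.V) :
    ((cosetMap p (p.left.ρ g₀ s)).out)⁻¹ * (g₀ * (cosetMap p s).out) ∈ H := by
  apply QuotientGroup.eq.mp
  rw [QuotientGroup.out_eq', hom_rho, smul_out]

lemma toFiber_smul {p : Over (cosetObj G H)} (g₀ : G) (s : p.left.V) :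
    toFiber p (p.left.ρ g₀ s) = (⟨_, out_smul_mem g₀ s⟩ : H) • toFiber p s := by
  apply Subtype.ext
  rw [fiber_smul_val, toFiber_val, toFiber_val, rho_rho, rho_rho]
  have hcoe : ((⟨_, out_smul_mem g₀ s⟩ : H) : G)
      = ((cosetMap p (p.left.ρ g₀ s)).out)⁻¹ * (g₀ * (cosetMap p s).out) := rfl
  have hgrp : ((cosetMap p (p.left.ρ g₀ s)).out)⁻¹ * g₀
      = ((⟨_, out_smul_mem g₀ s⟩ : H) : G) * ((cosetMap p s).out)⁻¹ := by
    rw [hcoe]; group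
  rw [hgrp]

/-- Extension of a map on fibers to a `G`-map. -/
noncomputable def extHom {p q : Over (cosetObj G H)}
    (f : (fiberFunctor G H).obj p ⟶ (fiberFunctor G H).obj q) (s : p.left.V) : q.left.V :=
  q.left.ρ ((cosetMap p s).out) (fiberMap f (toFiber p s)).val

lemma extHom_equivariant {p q : Over (cosetObj G H)}
    (f : (fiberFunctor G H).obj p ⟶ (fiberFunctor G H).obj q) (g₀ : G) (s : p.left.V) :
    extHom f (p.left.ρ g₀ s) = q.left.ρ g₀ (extHom f s) := by
  unfold extHom
  rw [toFiber_smul g₀ s, f_comm, fiber_smul_val, rho_rho, rho_rho]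
  have hcoe : ((⟨_, out_smul_mem g₀ s⟩ : H) : G)
      = ((cosetMap p (p.left.ρ g₀ s)).out)⁻¹ * (g₀ * (cosetMap p s).out) := rfl
  have hgrp : (cosetMap p (p.left.ρ g₀ s)).out * ((⟨_, out_smul_mem g₀ s⟩ : H) : G)
      = g₀ * (cosetMap p s).out := by
    rw [hcoe]; group
  rw [hgrp]

lemma extHom_over {p q : Over (cosetObj G H)}
    (f : (fiberFunctor G H).obj p ⟶ (fiberFunctor G H).obj q) (s : p.left.V) :
    cosetMap q (extHom f s) = cosetMap p s := by
  unfold extHom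
  rw [show cosetMap q (q.left.ρ ((cosetMap p s).out) (fiberMap f (toFiber p s)).val)
      = ((cosetMap p s).out : G) • cosetMap q (fiberMap f (toFiber p s)).val from
    hom_rho q _ _]
  rw [fiber_prop q (fiberMap f (toFiber p s)), MulAction.Quotient.smul_coe, smul_eq_mul,
    mul_one]
  exact QuotientGroup.out_eq' _

instance fiberFull : (fiberFunctor G H).Full where
  map_surjective {p q} f := by
    refine ⟨Over.homMk ⟨TypeCat.ofHom (extHom f), fun g => by ext s; exact extHom_equivariant f g s⟩
      (by apply Action.hom_ext; ext s; exact extHom_over f s), ?_⟩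
    apply Action.hom_ext
    ext (x : FiberT p)
    apply Subtype.ext
    show extHom f x.val = (fiberMap f x).val
    have hmem : ((cosetMap p x.val).out) ∈ H := by
      have h1 : ((1 : G) : G ⧸ H) = (((cosetMap p x.val).out : G) : G ⧸ H) := by
        rw [QuotientGroup.out_eq']
        exact (fiber_prop p x).symm
      simpa using QuotientGroup.eq.mp h1
    have htf : toFiber p x.val = (⟨_, hmem⟩ : H)⁻¹ • x := by
      apply Subtype.ext
      rfl
    unfold extHom
    rw [htf, f_comm, fiber_smul_val,
      show (((⟨_, hmem⟩ : H)⁻¹ : H) : G) = ((cosetMap p x.val).out)⁻¹ from rfl,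
      rho_rho, mul_inv_cancel, rho_one]

section Induced

variable (T : Action (Type u) (MonCat.of H))

lemma Trho_rho (h h' : H) (t : T.V) : T.ρ h (T.ρ h' t) = T.ρ (h * h') t := by
  rw [map_mul]; rfl

lemma Trho_one (t : T.V) : T.ρ (1 : H) t = t := by
  rw [map_one]; rfl

/-- The relation defining the induced `G`-set `G ×_H T`. -/
def indSetoid : Setoid (G × T.V) where
  r x y := ∃ h : H, y.1 = x.1 * h ∧ x.2 = T.ρ h y.2
  iseqv := by
    constructor
    · exact fun x => ⟨1, by simp, by rw [Trho_one]⟩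
    · rintro x y ⟨h, h1, h2⟩
      exact ⟨h⁻¹, by simp [h1, mul_assoc], by rw [h2, Trho_rho, inv_mul_cancel, Trho_one]⟩
    · rintro x y z ⟨h, h1, h2⟩ ⟨h', h1', h2'⟩
      exact ⟨h * h', by simp [h1', h1, mul_assoc], by rw [h2, h2', Trho_rho]⟩

/-- The induced `G`-set `G ×_H T`. -/
abbrev IndT : Type u := Quotient (indSetoid T)

instance : MulAction G (IndT T) where
  smul g := Quotient.map (fun x => (g * x.1, x.2))
    (by rintro a b ⟨h, h1, h2⟩
        exact ⟨h, by dsimp only; rw [h1, mul_assoc], h2⟩)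
  one_smul x := Quotient.inductionOn x fun a => by
    show Quotient.map _ _ (Quotient.mk _ a) = Quotient.mk _ a
    rw [Quotient.map_mk, one_mul]
  mul_smul g g' x := Quotient.inductionOn x fun a => by
    show Quotient.map _ _ (Quotient.mk _ a)
      = Quotient.map _ _ (Quotient.map _ _ (Quotient.mk _ a))
    rw [Quotient.map_mk, Quotient.map_mk, Quotient.map_mk, mul_assoc]

/-- The projection map `G ×_H T → G ⧸ H`. -/
def indProj : IndT T → G ⧸ H :=
  Quotient.lift (fun x : G × T.V => ((x.1 : G ⧸ H)))
    (by rintro a b ⟨h, h1, h2⟩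
        show ((a.1 : G ⧸ H)) = ((b.1 : G ⧸ H))
        rw [h1, QuotientGroup.mk_mul_of_mem _ h.2])

lemma indProj_comm (g : G) (x : IndT T) : indProj T (g • x) = g • indProj T x :=
  Quotient.inductionOn x fun a => by
    show ((g * a.1 : G) : G ⧸ H) = g • ((a.1 : G) : G ⧸ H)
    rw [MulAction.Quotient.smul_coe, smul_eq_mul]

/-- The projection as a morphism of `G`-sets. -/
def indHom : Action.ofMulAction G (IndT T) ⟶ cosetObj G H where
  hom := TypeCat.ofHom (indProj T)
  comm g := by ext x; exact indProj_comm T g x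

/-- The projection `G ×_H T → G ⧸ H` as an object of the slice category. -/
def indObj : Over (cosetObj G H) := Over.mk (indHom T)

/-- The comparison map from `T` to the fiber of the induced `G`-set. -/
def indFiberMap : T.V → FiberT (indObj T) := fun t =>
  ⟨Quotient.mk (indSetoid T) ((1 : G), t), rfl⟩

lemma indFiberMap_bijective : Function.Bijective (indFiberMap T) := by
  constructor
  · intro t t' htt'
    obtain ⟨h, h1, h2⟩ := Quotient.exact (congrArg Subtype.val htt')
    have hone : h = (1 : H) := by
      apply Subtype.ext
      have h1' : (1 : G) = 1 * (h : G) := h1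
      simpa using h1'.symm
    have h2' : t = T.ρ h t' := h2
    rw [h2', hone, Trho_one]
  · rintro ⟨x, hx⟩
    obtain ⟨a, rfl⟩ := Quotient.exists_rep x
    have hmem : a.1 ∈ H := by
      have h1 : ((a.1 : G) : G ⧸ H) = ((1 : G) : G ⧸ H) := hx
      simpa using QuotientGroup.eq.mp h1.symm
    refine ⟨T.ρ (⟨a.1, hmem⟩ : H) a.2, ?_⟩
    apply Subtype.ext
    show Quotient.mk (indSetoid T) ((1 : G), T.ρ (⟨a.1, hmem⟩ : H) a.2)
      = Quotient.mk (indSetoid T) a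
    exact Quotient.sound ⟨⟨a.1, hmem⟩, by simp, rfl⟩

lemma indFiberMap_comm (h : H) (t : T.V) :
    indFiberMap T (T.ρ h t) = h • indFiberMap T t := by
  apply Subtype.ext
  rw [fiber_smul_val]
  show Quotient.mk (indSetoid T) ((1 : G), T.ρ h t)
    = Quotient.mk (indSetoid T) ((h : G) * 1, t)
  exact Quotient.sound ⟨h, by simp, rfl⟩

end Induced

instance fiberEssSurj : (fiberFunctor G H).EssSurj where
  mem_essImage T :=
    ⟨indObj T, ⟨(Action.mkIso (N := (fiberFunctor G H).obj (indObj T)) (Equiv.ofBijective (indFiberMap T) (indFiberMap_bijective T)).toIso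
      (fun h => by ext t; exact indFiberMap_comm T h t)).symm⟩⟩

end Helpers

/-- For a subgroup `H ≤ G`, the slice category of `G`-sets over the coset space `G ⧸ H` is
equivalent to the category of `H`-sets, via the functor sending `p : S → G ⧸ H` to the fiber
`p⁻¹(H)` over the identity coset with its natural `H`-action (the inverse equivalence sends an
`H`-set `T` to the induced `G`-set `G ×_H T` with its canonical projection to `G ⧸ H`). -/
theorem fiberFunctor_isEquivalence (G : Type u) [Group G] (H : Subgroup G) :
    (fiberFunctor G H).IsEquivalence := {}

end Stmt10
end

section
/- Let R be a ring and let Γ₊ be the category of finite pointed sets and basepoint-preserving maps. Call a functor E : Γ₊ ⥤ Mod_R additive if for all S, S' ∈ Γ₊ the morphism E(S ∨ S') → E(S) ⊕ E(S'), whose components are induced by the two maps collapsing one wedge summand to the basepoint, is an isomorphism. For an R-module M, let T_M : Γ₊ ⥤ Mod_R be the functor with T_M(S) = ⊕_{s ∈ S∖{o}} M (the direct sum of copies of M indexed by the non-basepoint elements), where a pointed map f : S → S' sends the summand indexed by s identically to the summand indexed by f(s) if f(s) is not the basepoint, and to 0 otherwise. Then M ↦ T_M is a fully faithful functor from Mod_R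 to the functor category, and its essential image is exactly the full subcategory of additive functors; in particular Mod_R is equivalent to the category of additive functors Γ₊ ⥤ Mod_R. -/
open CategoryTheory

universe u

namespace Stmt11

open scoped Classical

/-- The category `Γ₊` of finite pointed sets and basepoint-preserving maps. -/
abbrev FinPointed : Type (u + 1) :=
  CategoryTheory.ObjectProperty.FullSubcategory (fun P : Pointed.{u} => Finite P.X)

variable (R : Type u) [Ring R]

/-- The direct sum `⊕_{s ∈ S∖{o}} M` of copies of the module `M` indexed by the non-basepoint
elements of `S`, realized as finitely supported functions. -/
noncomputable def TObj (M : ModuleCat.{u} R) (P : FinPointed.{u}) : ModuleCat.{u} R :=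
  ModuleCat.of R ({s : P.obj.X // s ≠ P.obj.point} →₀ M)

/-- The map induced on direct sums by a pointed map `f : S → S'`: the summand indexed by `s`
is sent identically to the summand indexed by `f s` if `f s` is not the basepoint, and to `0`
otherwise. -/
noncomputable def TMap (M : ModuleCat.{u} R) {P Q : FinPointed.{u}} (f : P ⟶ Q) :
    TObj R M P ⟶ TObj R M Q :=
  ModuleCat.ofHom (Finsupp.lsum ℕ fun s =>
    if h : f.hom.toFun s.val = Q.obj.point then 0
    else Finsupp.lsingle (⟨f.hom.toFun s.val, h⟩ : {t : Q.obj.X // t ≠ Q.obj.point}))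

theorem TMap_single (M : ModuleCat.{u} R) {P Q : FinPointed.{u}} (f : P ⟶ Q)
    (a : {s : P.obj.X // s ≠ P.obj.point}) (b : M) :
    TMap R M f (Finsupp.single a b) =
      if h : f.hom.toFun a.val = Q.obj.point then 0
      else Finsupp.single (⟨f.hom.toFun a.val, h⟩ : {t : Q.obj.X // t ≠ Q.obj.point}) b := by
  rw [TMap]
  erw [Finsupp.lsum_single]
  split_ifs with h
  · rfl
  · rfl

theorem mapRange_single' {M N : ModuleCat.{u} R} (φ : M ⟶ N) {α : Type u} (a : α) (b : M) :
    Finsupp.mapRange.linearMap φ.hom (Finsupp.single a b)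
      = Finsupp.single a (φ b) := by
  rw [Finsupp.mapRange.linearMap_apply, Finsupp.mapRange_single]

/-- The functor `T_M : Γ₊ ⥤ Mod_R` associated to an `R`-module `M`. -/
noncomputable def TFunctor (M : ModuleCat.{u} R) : FinPointed.{u} ⥤ ModuleCat.{u} R where
  obj P := TObj R M P
  map f := TMap R M f
  map_id P := by
    apply ModuleCat.hom_ext
    apply Finsupp.lhom_ext
    intro a b
    show TMap R M (𝟙 P) (Finsupp.single a b) = Finsupp.single a b
    rw [TMap_single,
      dif_neg (show ¬((𝟙 P : P ⟶ P).hom.toFun a.val = P.obj.point) from a.property)]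
    rfl
  map_comp {P Q S} f g := by
    apply ModuleCat.hom_ext
    apply Finsupp.lhom_ext
    intro a b
    show TMap R M (f ≫ g) (Finsupp.single a b)
      = TMap R M g (TMap R M f (Finsupp.single a b))
    rw [TMap_single]
    by_cases h1 : f.hom.toFun a.val = Q.obj.point
    · rw [dif_pos (show (f ≫ g).hom.toFun a.val = S.obj.point by
        show g.hom.toFun (f.hom.toFun a.val) = S.obj.point
        rw [h1, g.hom.map_point]),
        TMap_single, dif_pos h1]
      exact (map_zero (TMap R M g).hom).symm
    · rw [TMap_single, dif_neg h1, TMap_single]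
      rfl

/-- `M ↦ T_M`, as a functor from `Mod_R` to the category of functors `Γ₊ ⥤ Mod_R`. -/
noncomputable def T : ModuleCat.{u} R ⥤ (FinPointed.{u} ⥤ ModuleCat.{u} R) where
  obj M := TFunctor R M
  map {M N} φ :=
    { app := fun P => (ModuleCat.ofHom (Finsupp.mapRange.linearMap φ.hom) :
        TObj R M P ⟶ TObj R N P)
      naturality := fun P Q f => by
        apply ModuleCat.hom_ext
        apply Finsupp.lhom_ext
        intro a b
        show Finsupp.mapRange.linearMap φ.hom (TMap R M f (Finsupp.single a b))
          = TMap R N f (Finsupp.mapRange.linearMap φ.hom (Finsupp.single a b))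
        rw [TMap_single, mapRange_single', TMap_single]
        split_ifs with h
        · rw [map_zero]
        · rw [mapRange_single'] }
  map_id M := by
    apply NatTrans.ext
    funext P
    apply ModuleCat.hom_ext
    apply Finsupp.lhom_ext
    intro a b
    show Finsupp.mapRange.linearMap (𝟙 M : M ⟶ M).hom (Finsupp.single a b)
      = Finsupp.single a b
    rw [mapRange_single']
    rfl
  map_comp {M N K} φ ψ := by
    apply NatTrans.ext
    funext P
    apply ModuleCat.hom_ext
    apply Finsupp.lhom_ext
    intro a b
    show Finsupp.mapRange.linearMap (φ ≫ ψ : M ⟶ K).hom (Finsupp.single a b)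
      = Finsupp.mapRange.linearMap ψ.hom
          (Finsupp.mapRange.linearMap φ.hom (Finsupp.single a b))
    rw [mapRange_single', mapRange_single', mapRange_single']
    rfl

/-- The wedge `S ∨ S'` of two finite pointed sets: the disjoint union of `S` and `S'` with
the two basepoints identified (realized inside the product `S × S'`). -/
def wedge (P Q : FinPointed.{u}) : FinPointed.{u} :=
  ⟨⟨{x : P.obj.X × Q.obj.X // x.1 = P.obj.point ∨ x.2 = Q.obj.point},
    ⟨(P.obj.point, Q.obj.point), Or.inl rfl⟩⟩, by
      have := P.property
      have := Q.property
      exact Subtype.finite⟩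

/-- The map `S ∨ S' → S` collapsing the wedge summand `S'` to the basepoint. -/
noncomputable def collapseFst (P Q : FinPointed.{u}) : wedge P Q ⟶ P :=
  ⟨⟨fun x => if x.val.2 = Q.obj.point then x.val.1 else P.obj.point, by
    show (if (Q.obj.point : Q.obj.X) = Q.obj.point then P.obj.point else P.obj.point)
      = P.obj.point
    rw [if_pos rfl]⟩⟩

/-- The map `S ∨ S' → S'` collapsing the wedge summand `S` to the basepoint. -/
noncomputable def collapseSnd (P Q : FinPointed.{u}) : wedge P Q ⟶ Q :=
  ⟨⟨fun x => if x.val.1 = P.obj.point then x.val.2 else Q.obj.point, by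
    show (if (P.obj.point : P.obj.X) = P.obj.point then Q.obj.point else Q.obj.point)
      = Q.obj.point
    rw [if_pos rfl]⟩⟩

/-- A functor `E : Γ₊ ⥤ Mod_R` is *additive* if for all finite pointed sets `S`, `S'` the map
`E(S ∨ S') → E(S) ⊕ E(S')`, whose components are induced by the two collapse maps, is an
isomorphism. -/
def IsAdditive (E : FinPointed.{u} ⥤ ModuleCat.{u} R) : Prop :=
  ∀ P Q : FinPointed.{u}, Function.Bijective
    (fun x : E.obj (wedge P Q) =>
      (E.map (collapseFst P Q) x, E.map (collapseSnd P Q) x))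

section Aux
variable (R : Type u) [Ring R]

def S1 : FinPointed.{u} := ⟨⟨ULift Bool, ⟨false⟩⟩, inferInstance⟩

def onePt : FinPointed.{u} := ⟨⟨PUnit, PUnit.unit⟩, inferInstance⟩

def eS1 : {s : (S1.{u}).obj.X // s ≠ S1.obj.point} :=
  ⟨⟨true⟩, fun h => by cases congrArg ULift.down h⟩

instance : Unique {s : (S1.{u}).obj.X // s ≠ S1.obj.point} where
  default := eS1
  uniq := by
    rintro ⟨⟨b⟩, h⟩
    cases b
    · exact absurd rfl h
    · rfl

def incl (P : FinPointed.{u}) (s : P.obj.X) : S1 ⟶ P :=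
  ⟨⟨fun x => if x.down then s else P.obj.point, rfl⟩⟩

theorem incl_toFun_true (P : FinPointed.{u}) (s : P.obj.X) :
    (incl P s).hom.toFun (ULift.up true) = s := rfl

theorem incl_self : incl S1.{u} (ULift.up true) = 𝟙 S1 := by
  apply ObjectProperty.hom_ext
  apply Pointed.Hom.ext
  funext x
  rcases x with ⟨b⟩
  cases b <;> rfl

end Aux
section Aux2
variable (R : Type u) [Ring R]

theorem onePt_zero {E : FinPointed.{u} ⥤ ModuleCat.{u} R} (hE : IsAdditive R E)
    (x : E.obj onePt) : x = 0 := by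
  have hcc : collapseFst onePt.{u} onePt = collapseSnd onePt onePt := by
    apply ObjectProperty.hom_ext
    apply Pointed.Hom.ext
    funext y
    show PUnit.unit = _
    rfl
  obtain ⟨y, hy⟩ := (hE onePt onePt).2 (x, 0)
  have h1 : E.map (collapseFst onePt onePt) y = x := congrArg Prod.fst hy
  have h2 : E.map (collapseSnd onePt onePt) y = 0 := congrArg Prod.snd hy
  rw [hcc] at h1
  rw [← h1, h2]

theorem map_zero_of_toPoint {E : FinPointed.{u} ⥤ ModuleCat.{u} R} (hE : IsAdditive R E)
    {P Q : FinPointed.{u}} (f : P ⟶ Q) (hf : ∀ x, f.hom.toFun x = Q.obj.point)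
    (x : E.obj P) : E.map f x = 0 := by
  have hfac : f = (⟨⟨fun _ => PUnit.unit, rfl⟩⟩ : P ⟶ onePt) ≫
      (⟨⟨fun _ => Q.obj.point, rfl⟩⟩ : onePt ⟶ Q) := by
    apply ObjectProperty.hom_ext
    apply Pointed.Hom.ext
    funext y
    exact hf y
  rw [hfac, E.map_comp]
  show E.map _ (E.map _ x) = 0
  rw [onePt_zero R hE (E.map (⟨⟨fun _ => PUnit.unit, rfl⟩⟩ : P ⟶ onePt) x), map_zero]

/-- inclusion of the first wedge summand -/
def inlW (P Q : FinPointed.{u}) : P ⟶ wedge P Q :=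
  ⟨⟨fun x => ⟨(x, Q.obj.point), Or.inr rfl⟩, Subtype.ext rfl⟩⟩

def inrW (P Q : FinPointed.{u}) : Q ⟶ wedge P Q :=
  ⟨⟨fun y => ⟨(P.obj.point, y), Or.inl rfl⟩, Subtype.ext rfl⟩⟩

theorem inlW_collapseFst (P Q : FinPointed.{u}) : inlW P Q ≫ collapseFst P Q = 𝟙 P := by
  apply ObjectProperty.hom_ext
  apply Pointed.Hom.ext
  funext x
  show (if (Q.obj.point : Q.obj.X) = Q.obj.point then x else P.obj.point) = x
  rw [if_pos rfl]

theorem inrW_collapseSnd (P Q : FinPointed.{u}) : inrW P Q ≫ collapseSnd P Q = 𝟙 Q := by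
  apply ObjectProperty.hom_ext
  apply Pointed.Hom.ext
  funext y
  show (if (P.obj.point : P.obj.X) = P.obj.point then y else Q.obj.point) = y
  rw [if_pos rfl]

theorem inlW_collapseSnd (P Q : FinPointed.{u}) (x : P.obj.X) :
    (inlW P Q ≫ collapseSnd P Q).hom.toFun x = Q.obj.point := by
  show (if x = P.obj.point then Q.obj.point else Q.obj.point) = Q.obj.point
  split_ifs <;> rfl

theorem inrW_collapseFst (P Q : FinPointed.{u}) (y : Q.obj.X) :
    (inrW P Q ≫ collapseFst P Q).hom.toFun y = P.obj.point := by
  show (if y = Q.obj.point then P.obj.point else P.obj.point) = P.obj.point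
  split_ifs <;> rfl

/-- TMap of a map collapsing everything to the point is 0. -/
theorem TMap_eq_zero (M : ModuleCat.{u} R) {P Q : FinPointed.{u}} (f : P ⟶ Q)
    (hf : ∀ x, f.hom.toFun x = Q.obj.point) : TMap R M f = 0 := by
  apply ModuleCat.hom_ext
  apply Finsupp.lhom_ext
  intro a b
  show TMap R M f (Finsupp.single a b) = 0
  rw [TMap_single, dif_pos (hf a.val)]
  rfl

end Aux2
section Aux3
variable (R : Type u) [Ring R]

theorem TM_comp (M : ModuleCat.{u} R) {P Q S : FinPointed.{u}} (f : P ⟶ Q) (g : Q ⟶ S)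
    (x : TObj R M P) : TMap R M (f ≫ g) x = TMap R M g (TMap R M f x) := by
  have := (TFunctor R M).map_comp f g
  have h : TMap R M (f ≫ g) = TMap R M f ≫ TMap R M g := this
  rw [h]
  rfl

theorem TM_id (M : ModuleCat.{u} R) {P : FinPointed.{u}} (x : TObj R M P) :
    TMap R M (𝟙 P) x = x := by
  have h : TMap R M (𝟙 P) = 𝟙 (TObj R M P) := (TFunctor R M).map_id P
  rw [h]
  rfl

theorem TFunctor_additive (M : ModuleCat.{u} R) : IsAdditive R (TFunctor R M) := by
  intro P Q
  rw [Function.bijective_iff_has_inverse]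
  refine ⟨fun p => TMap R M (inlW P Q) p.1 + TMap R M (inrW P Q) p.2, ?_, ?_⟩
  · -- left inverse
    intro x
    have key : ((TMap R M (inlW P Q)).hom.comp
          (((TMap R M (collapseFst P Q)).hom : TObj R M (wedge P Q) →ₗ[R] TObj R M P)) +
        (TMap R M (inrW P Q)).hom.comp
          (((TMap R M (collapseSnd P Q)).hom : TObj R M (wedge P Q) →ₗ[R] TObj R M Q)))
        = LinearMap.id := by
      apply Finsupp.lhom_ext
      intro a b
      show TMap R M (inlW P Q) (TMap R M (collapseFst P Q) (Finsupp.single a b)) +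
          TMap R M (inrW P Q) (TMap R M (collapseSnd P Q) (Finsupp.single a b))
          = Finsupp.single a b
      rw [TMap_single, TMap_single]
      by_cases h1 : a.val.val.1 = P.obj.point
      · have h2 : a.val.val.2 ≠ Q.obj.point := by
          intro h2
          exact a.property (Subtype.ext (Prod.ext h1 h2))
        have hcf : (collapseFst P Q).hom.toFun a.val = P.obj.point := by
          show (if a.val.val.2 = Q.obj.point then a.val.val.1 else P.obj.point) = P.obj.point
          rw [if_neg h2]
        have hcs : (collapseSnd P Q).hom.toFun a.val = a.val.val.2 := by
          show (if a.val.val.1 = P.obj.point then a.val.val.2 else Q.obj.point) = a.val.val.2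
          rw [if_pos h1]
        rw [dif_pos hcf]; erw [map_zero, zero_add]
        have hne : (collapseSnd P Q).hom.toFun a.val ≠ Q.obj.point := by rw [hcs]; exact h2
        rw [dif_neg hne, TMap_single]
        have hinr : (inrW P Q).hom.toFun ((⟨(collapseSnd P Q).hom.toFun a.val, hne⟩ :
            {t : Q.obj.X // t ≠ Q.obj.point}).val) = a.val := by
          apply Subtype.ext
          show (P.obj.point, (collapseSnd P Q).hom.toFun a.val) = a.val.val
          rw [hcs]
          exact Prod.ext h1.symm rfl
        have hne2 : (inrW P Q).hom.toFun ((⟨(collapseSnd P Q).hom.toFun a.val, hne⟩ :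
            {t : Q.obj.X // t ≠ Q.obj.point}).val) ≠ (wedge P Q).obj.point := by
          rw [hinr]; exact a.property
        rw [dif_neg hne2]
        congr 1
        exact Subtype.ext hinr
      · have h2 : a.val.val.2 = Q.obj.point := by
          rcases a.val.property with h | h
          · exact absurd h h1
          · exact h
        have hcf : (collapseFst P Q).hom.toFun a.val = a.val.val.1 := by
          show (if a.val.val.2 = Q.obj.point then a.val.val.1 else P.obj.point) = a.val.val.1
          rw [if_pos h2]
        have hcs : (collapseSnd P Q).hom.toFun a.val = Q.obj.point := by
          show (if a.val.val.1 = P.obj.point then a.val.val.2 else Q.obj.point) = Q.obj.point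
          rw [if_neg h1]
        rw [dif_pos hcs]; erw [map_zero, add_zero]
        have hne : (collapseFst P Q).hom.toFun a.val ≠ P.obj.point := by rw [hcf]; exact h1
        rw [dif_neg hne, TMap_single]
        have hinl : (inlW P Q).hom.toFun ((⟨(collapseFst P Q).hom.toFun a.val, hne⟩ :
            {t : P.obj.X // t ≠ P.obj.point}).val) = a.val := by
          apply Subtype.ext
          show ((collapseFst P Q).hom.toFun a.val, Q.obj.point) = a.val.val
          rw [hcf]
          exact Prod.ext rfl h2.symm
        have hne2 : (inlW P Q).hom.toFun ((⟨(collapseFst P Q).hom.toFun a.val, hne⟩ :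
            {t : P.obj.X // t ≠ P.obj.point}).val) ≠ (wedge P Q).obj.point := by
          rw [hinl]; exact a.property
        rw [dif_neg hne2]
        congr 1
        exact Subtype.ext hinl
    exact congrArg (fun (φ : TObj R M (wedge P Q) →ₗ[R] TObj R M (wedge P Q)) => φ x) key
  · -- right inverse
    rintro ⟨u, v⟩
    show ((TFunctor R M).map (collapseFst P Q) (TMap R M (inlW P Q) u + TMap R M (inrW P Q) v),
        (TFunctor R M).map (collapseSnd P Q) (TMap R M (inlW P Q) u + TMap R M (inrW P Q) v))
      = (u, v)
    have e1 : TMap R M (collapseFst P Q) (TMap R M (inlW P Q) u) = u := by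
      erw [← TM_comp, inlW_collapseFst, TM_id]
    have e2 : TMap R M (collapseFst P Q) (TMap R M (inrW P Q) v) = 0 := by
      erw [← TM_comp, TMap_eq_zero R M _ (inrW_collapseFst P Q)]
      rfl
    have e3 : TMap R M (collapseSnd P Q) (TMap R M (inlW P Q) u) = 0 := by
      erw [← TM_comp, TMap_eq_zero R M _ (inlW_collapseSnd P Q)]
      rfl
    have e4 : TMap R M (collapseSnd P Q) (TMap R M (inrW P Q) v) = v := by
      erw [← TM_comp, inrW_collapseSnd, TM_id]
    have : ∀ (f : TObj R M (wedge P Q) ⟶ TObj R M P) (x y : TObj R M (wedge P Q)),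
        f (x + y) = f x + f y := fun f x y => map_add f.hom x y
    rw [Prod.mk.injEq]
    constructor
    · show TMap R M (collapseFst P Q) (TMap R M (inlW P Q) u + TMap R M (inrW P Q) v) = u
      rw [map_add, e1, e2]; erw [add_zero]
    · show TMap R M (collapseSnd P Q) (TMap R M (inlW P Q) u + TMap R M (inrW P Q) v) = v
      rw [map_add, e3, e4]; erw [zero_add]
end Aux3
section Aux4
variable (R : Type u) [Ring R]

theorem happ {A B : ModuleCat.{u} R} {f g : A ⟶ B} (h : f = g) (x : A) : f x = g x :=
  congrArg (fun (φ : A ⟶ B) => φ x) h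

theorem bij_app_of_iso {E F : FinPointed.{u} ⥤ ModuleCat.{u} R} (η : E ⟶ F)
    {P Q : FinPointed.{u}} (i : P ≅ Q) (h : Function.Bijective (η.app P)) :
    Function.Bijective (η.app Q) := by
  have h1 : Function.Bijective (E.map i.inv) := by
    have : IsIso (E.map i.inv) := inferInstance
    exact ConcreteCategory.bijective_of_isIso (E.map i.inv)
  have h2 : Function.Bijective (F.map i.hom) := by
    have : IsIso (F.map i.hom) := inferInstance
    exact ConcreteCategory.bijective_of_isIso (F.map i.hom)
  have key : ∀ x, η.app Q x = F.map i.hom (η.app P (E.map i.inv x)) := by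
    intro x
    have hnat : F.map i.hom (η.app P (E.map i.inv x)) = η.app Q (E.map i.hom (E.map i.inv x)) :=
      happ R (η.naturality i.hom).symm (E.map i.inv x)
    have hii : E.map i.inv ≫ E.map i.hom = 𝟙 (E.obj Q) := by
      rw [← E.map_comp, i.inv_hom_id, E.map_id]
    have h3 : η.app Q (E.map i.hom (E.map i.inv x)) = η.app Q x :=
      congrArg (η.app Q) (happ R hii x)
    rw [hnat, h3]
  have : Function.Bijective (fun x => F.map i.hom (η.app P (E.map i.inv x))) :=
    (h2.comp h).comp h1
  exact (funext key : ⇑(η.app Q) = _) ▸ this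

theorem additive_of_iso {E F : FinPointed.{u} ⥤ ModuleCat.{u} R} (i : E ≅ F)
    (hE : IsAdditive R E) : IsAdditive R F := by
  intro P Q
  have hinvhom : ∀ (S : FinPointed.{u}), i.inv.app S ≫ i.hom.app S = 𝟙 (F.obj S) := by
    intro S
    rw [← NatTrans.comp_app, i.inv_hom_id]
    rfl
  have key : (fun x : F.obj (wedge P Q) =>
      (F.map (collapseFst P Q) x, F.map (collapseSnd P Q) x)) =
      (Prod.map (i.hom.app P) (i.hom.app Q)) ∘
        (fun y : E.obj (wedge P Q) =>
          (E.map (collapseFst P Q) y, E.map (collapseSnd P Q) y)) ∘ (i.inv.app (wedge P Q)) := by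
    funext x
    have hx : i.hom.app (wedge P Q) (i.inv.app (wedge P Q) x) = x :=
      happ R (hinvhom (wedge P Q)) x
    have c1 : i.hom.app P (E.map (collapseFst P Q) (i.inv.app (wedge P Q) x))
        = F.map (collapseFst P Q) (i.hom.app (wedge P Q) (i.inv.app (wedge P Q) x)) :=
      happ R (i.hom.naturality (collapseFst P Q)) (i.inv.app (wedge P Q) x)
    have c2 : i.hom.app Q (E.map (collapseSnd P Q) (i.inv.app (wedge P Q) x))
        = F.map (collapseSnd P Q) (i.hom.app (wedge P Q) (i.inv.app (wedge P Q) x)) :=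
      happ R (i.hom.naturality (collapseSnd P Q)) (i.inv.app (wedge P Q) x)
    rw [hx] at c1 c2
    show (F.map (collapseFst P Q) x, F.map (collapseSnd P Q) x) = (_, _)
    rw [← c1, ← c2]
  rw [key]
  have hinv : Function.Bijective (i.inv.app (wedge P Q)) := by
    have : IsIso (i.inv.app (wedge P Q)) := inferInstance
    exact ConcreteCategory.bijective_of_isIso (i.inv.app (wedge P Q))
  have hP : Function.Bijective (i.hom.app P) := by
    have : IsIso (i.hom.app P) := inferInstance
    exact ConcreteCategory.bijective_of_isIso (i.hom.app P)
  have hQ : Function.Bijective (i.hom.app Q) := by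
    have : IsIso (i.hom.app Q) := inferInstance
    exact ConcreteCategory.bijective_of_isIso (i.hom.app Q)
  exact ((hP.prodMap hQ).comp (hE P Q)).comp hinv

theorem bij_app_wedge {E F : FinPointed.{u} ⥤ ModuleCat.{u} R} (η : E ⟶ F)
    (hE : IsAdditive R E) (hF : IsAdditive R F) {P Q : FinPointed.{u}}
    (hP : Function.Bijective (η.app P)) (hQ : Function.Bijective (η.app Q)) :
    Function.Bijective (η.app (wedge P Q)) := by
  have key : (fun y : F.obj (wedge P Q) =>
        (F.map (collapseFst P Q) y, F.map (collapseSnd P Q) y)) ∘ (η.app (wedge P Q))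
      = (Prod.map (η.app P) (η.app Q)) ∘
        (fun x : E.obj (wedge P Q) =>
          (E.map (collapseFst P Q) x, E.map (collapseSnd P Q) x)) := by
    funext x
    have c1 : E.map (collapseFst P Q) ≫ η.app P = η.app (wedge P Q) ≫ F.map (collapseFst P Q) :=
      η.naturality (collapseFst P Q)
    have c2 : E.map (collapseSnd P Q) ≫ η.app Q = η.app (wedge P Q) ≫ F.map (collapseSnd P Q) :=
      η.naturality (collapseSnd P Q)
    have d1 : η.app P (E.map (collapseFst P Q) x)
        = F.map (collapseFst P Q) (η.app (wedge P Q) x) := happ R c1 x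
    have d2 : η.app Q (E.map (collapseSnd P Q) x)
        = F.map (collapseSnd P Q) (η.app (wedge P Q) x) := happ R c2 x
    show (F.map (collapseFst P Q) (η.app (wedge P Q) x),
        F.map (collapseSnd P Q) (η.app (wedge P Q) x)) = (_, _)
    rw [d1, d2]
  have hcomp : Function.Bijective ((fun y : F.obj (wedge P Q) =>
        (F.map (collapseFst P Q) y, F.map (collapseSnd P Q) y)) ∘ (η.app (wedge P Q))) := by
    rw [key]
    exact (hP.prodMap hQ).comp (hE P Q)
  constructor
  · intro x y hxy
    exact hcomp.injective (by show _ = ((fun y => _) ∘ _) y; simp only [Function.comp_apply, hxy])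
  · intro y
    obtain ⟨x, hx⟩ := hcomp.surjective ((fun y : F.obj (wedge P Q) =>
        (F.map (collapseFst P Q) y, F.map (collapseSnd P Q) y)) y)
    exact ⟨x, (hF P Q).injective hx⟩
end Aux4
section Aux5
variable (R : Type u) [Ring R]

noncomputable def alphaApp (E : FinPointed.{u} ⥤ ModuleCat.{u} R) (P : FinPointed.{u}) :
    TObj R (E.obj S1) P ⟶ E.obj P :=
  ModuleCat.ofHom (Finsupp.lsum ℕ fun s => (E.map (incl P s.val)).hom)

theorem alphaApp_single (E : FinPointed.{u} ⥤ ModuleCat.{u} R) (P : FinPointed.{u})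
    (a : {s : P.obj.X // s ≠ P.obj.point}) (b : E.obj S1) :
    alphaApp R E P (Finsupp.single a b) = E.map (incl P a.val) b := by
  rw [alphaApp]
  erw [Finsupp.lsum_single]

noncomputable def alphaNat {E : FinPointed.{u} ⥤ ModuleCat.{u} R} (hE : IsAdditive R E) :
    TFunctor R (E.obj S1) ⟶ E where
  app P := alphaApp R E P
  naturality {P Q} f := by
    apply ModuleCat.hom_ext
    apply Finsupp.lhom_ext
    intro a b
    show alphaApp R E Q (TMap R (E.obj S1) f (Finsupp.single a b))
      = E.map f (alphaApp R E P (Finsupp.single a b))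
    rw [TMap_single, alphaApp_single]
    have hcomp : E.map f (E.map (incl P a.val) b) = E.map (incl P a.val ≫ f) b := by
      rw [E.map_comp]; rfl
    rw [hcomp]
    split_ifs with h
    · erw [map_zero]
      symm
      apply map_zero_of_toPoint R hE
      rintro ⟨x⟩
      cases x
      · show f.hom.toFun ((incl P a.val).hom.toFun (ULift.up false)) = Q.obj.point
        show f.hom.toFun P.obj.point = Q.obj.point
        exact f.hom.map_point
      · show f.hom.toFun ((incl P a.val).hom.toFun (ULift.up true)) = Q.obj.point
        show f.hom.toFun a.val = Q.obj.point
        exact h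
    · rw [alphaApp_single]
      have : incl Q (f.hom.toFun a.val) = incl P a.val ≫ f := by
        apply ObjectProperty.hom_ext
        apply Pointed.Hom.ext
        funext x
        rcases x with ⟨c⟩
        cases c
        · show Q.obj.point = f.hom.toFun ((incl P a.val).hom.toFun (ULift.up false))
          show Q.obj.point = f.hom.toFun P.obj.point
          exact f.hom.map_point.symm
        · rfl
      rw [this]

theorem alpha_bij_S1 {E : FinPointed.{u} ⥤ ModuleCat.{u} R} (hE : IsAdditive R E) :
    Function.Bijective ((alphaNat R hE).app S1) := by
  rw [Function.bijective_iff_has_inverse]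
  refine ⟨fun b => Finsupp.single eS1 b, ?_, ?_⟩
  · intro x
    let x' : {s : (S1.{u}).obj.X // s ≠ S1.obj.point} →₀ E.obj S1 := x
    have hx : x' = Finsupp.single eS1 (x' eS1) := Finsupp.unique_single _
    show Finsupp.single eS1 (alphaApp R E S1 x') = x'
    conv_lhs => rw [hx]
    rw [alphaApp_single]
    show Finsupp.single eS1 (E.map (incl S1 (ULift.up true)) (x' eS1)) = x'
    rw [incl_self, E.map_id]
    show Finsupp.single eS1 (x' eS1) = x'
    exact hx.symm
  · intro b
    show alphaApp R E S1 (Finsupp.single eS1 b) = b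
    rw [alphaApp_single]
    show E.map (incl S1 (ULift.up true)) b = b
    rw [incl_self, E.map_id]
    rfl
end Aux5
section Aux6
variable (R : Type u) [Ring R]

def del (P : FinPointed.{u}) (s₀ : P.obj.X) (h : s₀ ≠ P.obj.point) : FinPointed.{u} :=
  ⟨⟨{x : P.obj.X // x ≠ s₀}, ⟨P.obj.point, fun hh => h hh.symm⟩⟩, by
    have := P.property
    exact Subtype.finite⟩

noncomputable def wHomFun (P : FinPointed.{u}) (s₀ : P.obj.X) (h : s₀ ≠ P.obj.point)
    (x : P.obj.X) : (wedge S1 (del P s₀ h)).obj.X :=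
  if hx : x = s₀ then ⟨(⟨true⟩, (del P s₀ h).obj.point), Or.inr rfl⟩
    else ⟨(⟨false⟩, ⟨x, hx⟩), Or.inl rfl⟩

theorem wHomFun_def (P : FinPointed.{u}) (s₀ : P.obj.X) (h : s₀ ≠ P.obj.point) (x : P.obj.X) :
    wHomFun P s₀ h x = if hx : x = s₀ then ⟨(⟨true⟩, (del P s₀ h).obj.point), Or.inr rfl⟩
      else ⟨(⟨false⟩, ⟨x, hx⟩), Or.inl rfl⟩ := rfl

noncomputable def wHom (P : FinPointed.{u}) (s₀ : P.obj.X) (h : s₀ ≠ P.obj.point) :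
    P ⟶ wedge S1 (del P s₀ h) :=
  ⟨⟨wHomFun P s₀ h, by
    erw [wHomFun_def, dif_neg (fun hh => h hh.symm)]
    rfl⟩⟩

def wInv (P : FinPointed.{u}) (s₀ : P.obj.X) (h : s₀ ≠ P.obj.point) :
    wedge S1 (del P s₀ h) ⟶ P :=
  ⟨⟨fun z => if z.val.1.down then s₀ else z.val.2.val, rfl⟩⟩

theorem wHom_toFun (P : FinPointed.{u}) (s₀ : P.obj.X) (h : s₀ ≠ P.obj.point) (x : P.obj.X) :
    (wHom P s₀ h).hom.toFun x = if hx : x = s₀ then ⟨(⟨true⟩, (del P s₀ h).obj.point), Or.inr rfl⟩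
      else ⟨(⟨false⟩, ⟨x, hx⟩), Or.inl rfl⟩ := wHomFun_def P s₀ h x

noncomputable def wedgeIso (P : FinPointed.{u}) (s₀ : P.obj.X) (h : s₀ ≠ P.obj.point) :
    P ≅ wedge S1 (del P s₀ h) where
  hom := wHom P s₀ h
  inv := wInv P s₀ h
  hom_inv_id := by
    apply ObjectProperty.hom_ext
    apply Pointed.Hom.ext
    funext x
    show (wInv P s₀ h).hom.toFun ((wHom P s₀ h).hom.toFun x) = x
    by_cases hx : x = s₀
    · erw [wHom_toFun, dif_pos hx]
      exact hx.symm
    · erw [wHom_toFun, dif_neg hx]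
      rfl
  inv_hom_id := by
    apply ObjectProperty.hom_ext
    apply Pointed.Hom.ext
    funext z
    obtain ⟨⟨⟨b⟩, y⟩, hz⟩ := z
    show (wHom P s₀ h).hom.toFun ((wInv P s₀ h).hom.toFun ⟨(⟨b⟩, y), hz⟩) = ⟨(⟨b⟩, y), hz⟩
    cases b
    · show (wHom P s₀ h).hom.toFun y.val = _
      erw [wHom_toFun, dif_neg y.property]
      rfl
    · rcases hz with hh | hh
      · exact Bool.noConfusion (congrArg ULift.down hh)
      · show (wHom P s₀ h).hom.toFun s₀ = _
        erw [wHom_toFun, dif_pos rfl]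
        exact Subtype.ext (Prod.ext rfl hh.symm)

theorem card_del (P : FinPointed.{u}) (s₀ : P.obj.X) (h : s₀ ≠ P.obj.point) :
    Nat.card {x : P.obj.X // x ≠ P.obj.point}
      = Nat.card {y : (del P s₀ h).obj.X // y ≠ (del P s₀ h).obj.point} + 1 := by
  haveI : Finite P.obj.X := P.property
  have e : {y : (del P s₀ h).obj.X // y ≠ (del P s₀ h).obj.point} ⊕ PUnit.{u+1}
      ≃ {x : P.obj.X // x ≠ P.obj.point} := by
    refine ⟨fun z => z.elim (fun y => ⟨y.val.val, fun hh => y.property (Subtype.ext hh)⟩)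
        (fun _ => ⟨s₀, h⟩),
      fun z => if hz : z.val = s₀ then Sum.inr PUnit.unit
        else Sum.inl ⟨⟨z.val, hz⟩, fun hh => z.property (congrArg Subtype.val hh)⟩, ?_, ?_⟩
    · rintro (y | ⟨⟩)
      · dsimp only [Sum.elim_inl]
        rw [dif_neg y.val.property]
        rfl
      · dsimp only [Sum.elim_inr]
        rw [dif_pos rfl]
    · intro z
      by_cases hz : z.val = s₀
      · dsimp only
        rw [dif_pos hz]
        exact Subtype.ext hz.symm
      · dsimp only
        rw [dif_neg hz]
        rfl
  haveI : Finite (del P s₀ h).obj.X := (del P s₀ h).property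
  haveI : Finite {y : (del P s₀ h).obj.X // y ≠ (del P s₀ h).obj.point} := Subtype.finite
  rw [← Nat.card_congr e, Nat.card_sum]
  simp

theorem alpha_bij_of_card {E : FinPointed.{u} ⥤ ModuleCat.{u} R} (hE : IsAdditive R E) :
    ∀ (n : ℕ) (P : FinPointed.{u}), Nat.card {x : P.obj.X // x ≠ P.obj.point} = n →
      Function.Bijective ((alphaNat R hE).app P) := by
  intro n
  induction n with
  | zero =>
    intro P hcard
    haveI : Finite P.obj.X := P.property
    haveI : Finite {x : P.obj.X // x ≠ P.obj.point} := Subtype.finite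
    have hemp : IsEmpty {x : P.obj.X // x ≠ P.obj.point} := by
      rcases Nat.card_eq_zero.mp hcard with h | h
      · exact h
      · exact absurd h (not_infinite_iff_finite.mpr inferInstance)
    have hall : ∀ x : P.obj.X, x = P.obj.point := by
      intro x
      by_contra hx
      exact hemp.false ⟨x, hx⟩
    have hz : ∀ z : {s : P.obj.X // s ≠ P.obj.point} →₀ E.obj S1, z = 0 := by
      intro z
      apply Finsupp.ext
      intro a
      exact absurd (hall a.val) a.property
    have hEy : ∀ y : E.obj P, y = 0 := by
      intro y
      have h0 := map_zero_of_toPoint R hE (𝟙 P) hall y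
      rw [E.map_id] at h0
      exact h0
    constructor
    · intro x y _
      exact (hz x).trans (hz y).symm
    · intro y
      refine ⟨0, ?_⟩
      rw [map_zero]
      exact (hEy y).symm
  | succ n ih =>
    intro P hcard
    haveI : Finite P.obj.X := P.property
    haveI : Finite {x : P.obj.X // x ≠ P.obj.point} := Subtype.finite
    have hne : Nonempty {x : P.obj.X // x ≠ P.obj.point} :=
      (Nat.card_pos_iff.mp (by omega)).1
    obtain ⟨s₀, hs₀⟩ := hne
    have hdel : Nat.card {y : (del P s₀ hs₀).obj.X // y ≠ (del P s₀ hs₀).obj.point} = n := by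
      have := card_del P s₀ hs₀
      omega
    have h1 := alpha_bij_S1 R hE
    have h2 := ih (del P s₀ hs₀) hdel
    have hw := bij_app_wedge R (alphaNat R hE) (TFunctor_additive R (E.obj S1)) hE h1 h2
    exact bij_app_of_iso R (alphaNat R hE) (wedgeIso P s₀ hs₀).symm hw
end Aux6

/-- `M ↦ T_M` is a fully faithful functor from `Mod_R` to the category of functors
`Γ₊ ⥤ Mod_R`, and its essential image consists exactly of the additive functors; in
particular `Mod_R` is equivalent to the category of additive functors `Γ₊ ⥤ Mod_R`. -/
theorem T_fullyFaithful_essImage_additive :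
    (T R).Faithful ∧ (T R).Full ∧
      ∀ E : FinPointed.{u} ⥤ ModuleCat.{u} R,
        (IsAdditive R E ↔ ∃ M : ModuleCat.{u} R, Nonempty ((T R).obj M ≅ E)) := by
  refine ⟨⟨?_⟩, ⟨?_⟩, fun E => ⟨?_, ?_⟩⟩
  · -- faithful
    intro M N φ ψ h
    have h1 : (ModuleCat.ofHom (Finsupp.mapRange.linearMap φ.hom) : TObj R M S1 ⟶ TObj R N S1)
        = (ModuleCat.ofHom (Finsupp.mapRange.linearMap ψ.hom) : TObj R M S1 ⟶ TObj R N S1) :=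
      congrArg (fun η : (T R).obj M ⟶ (T R).obj N => η.app S1) h
    apply ModuleCat.hom_ext
    apply LinearMap.ext
    intro b
    have h2 := happ R (A := TObj R M S1) (B := TObj R N S1) h1 (Finsupp.single eS1 b)
    have h3 : Finsupp.single eS1 (φ b) = Finsupp.single eS1 (ψ b) := by
      rw [← mapRange_single' R φ eS1 b, ← mapRange_single' R ψ eS1 b]
      exact h2
    exact Finsupp.single_injective eS1 h3
  · -- full
    intro M N η
    let φ : M ⟶ N := ModuleCat.ofHom ((Finsupp.lapply eS1).comp
      (((η.app S1 : TObj R M S1 ⟶ TObj R N S1).hom : TObj R M S1 →ₗ[R] TObj R N S1).comp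
        (Finsupp.lsingle eS1)))
    have key : ∀ b : M, (η.app S1 (Finsupp.single eS1 b) :
        {s : (S1.{u}).obj.X // s ≠ S1.obj.point} →₀ N) = Finsupp.single eS1 (φ b) :=
      fun b => Finsupp.unique_single _
    refine ⟨φ, ?_⟩
    apply NatTrans.ext
    funext P
    apply ModuleCat.hom_ext
    apply Finsupp.lhom_ext
    intro a b
    show Finsupp.mapRange.linearMap φ.hom (Finsupp.single a b)
      = η.app P (Finsupp.single a b)
    rw [mapRange_single']
    have e1 : TMap R M (incl P a.val) (Finsupp.single eS1 b) = Finsupp.single a b := by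
      rw [TMap_single,
        dif_neg (show ¬((incl P a.val).hom.toFun eS1.val = P.obj.point) from a.property)]
      rfl
    have e2 : TMap R N (incl P a.val) (Finsupp.single eS1 (φ b)) = Finsupp.single a (φ b) := by
      rw [TMap_single,
        dif_neg (show ¬((incl P a.val).hom.toFun eS1.val = P.obj.point) from a.property)]
      rfl
    have hnat : η.app P (TMap R M (incl P a.val) (Finsupp.single eS1 b))
        = TMap R N (incl P a.val) (η.app S1 (Finsupp.single eS1 b)) :=
      happ R (η.naturality (incl P a.val)) (Finsupp.single eS1 b : TObj R M S1)
    rw [e1] at hnat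
    rw [key b] at hnat
    rw [e2] at hnat
    exact hnat.symm
  · -- additive → ∃ iso
    intro hE
    refine ⟨E.obj S1, ⟨?_⟩⟩
    have hbij : ∀ P, Function.Bijective ((alphaNat R hE).app P) :=
      fun P => alpha_bij_of_card R hE _ P rfl
    exact NatIso.ofComponents
      (fun P => (LinearEquiv.ofBijective
        (((alphaNat R hE).app P : TObj R (E.obj S1) P ⟶ E.obj P).hom :
          TObj R (E.obj S1) P →ₗ[R] E.obj P) (hbij P)).toModuleIso)
      (fun {P Q} f => (alphaNat R hE).naturality f)
  · -- ∃ iso → additive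
    rintro ⟨M, ⟨i⟩⟩
    exact additive_of_iso R i (TFunctor_additive R M)

end Stmt11
end

section
/- Let C be a small category, F : C ⥤ Cat a functor, ∫F its Grothendieck construction with projection π : ∫F ⥤ C. Fix an object c of C, let ι_c : F(c) ⥤ ∫F be the inclusion of the fiber over c, and let j_c : F(c) ⥤ (π ↓ c) be the induced functor into the comma category of π over c, sending x to the pair (x, id_c). Then: (a) j_c admits a left adjoint (sending a pair (e, f : π(e) → c) to the pushforward of e along f), so in particular j_c is a final functor; and (b) consequently, for any ring R and any functor E : ∫F ⥤ Mod_R, the canonical morphism from the colimit of ι_c ⋙ E over the fiber F(c) to the value at c of the (pointwise) left Kan extension of E along π is an isomorphism. -/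
open CategoryTheory CategoryTheory.Limits

universe u

namespace Stmt12

variable {C : Type u} [SmallCategory C] (F : C ⥤ Cat.{u, u})

/-- The canonical functor from the fiber `F.obj c` of the Grothendieck construction to the
comma category of the projection `Grothendieck.forget F` over `c`, sending `x` to the pair
`(ι_c x, 𝟙 c)`. -/
def jFiber (c : C) : F.obj c ⥤ CostructuredArrow (Grothendieck.forget F) c where
  obj x := CostructuredArrow.mk (Y := (Grothendieck.ι F c).obj x) (𝟙 c)
  map f := CostructuredArrow.homMk ((Grothendieck.ι F c).map f) (by exact Category.id_comp _)
  map_id x := by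
    apply CostructuredArrow.hom_ext
    exact (Grothendieck.ι F c).map_id x
  map_comp f g := by
    apply CostructuredArrow.hom_ext
    exact (Grothendieck.ι F c).map_comp f g

variable (c : C)

lemma baseEq {p q : CostructuredArrow (Grothendieck.forget F) c} (φ : p ⟶ q) :
    φ.left.base ≫ q.hom = p.hom := CostructuredArrow.w φ

lemma auxId {D E : Type*} [Category D] [Category E] (G : D ⥤ E) {a b : D}
    (h : G.obj a = G.obj b) (h' : b = a) : eqToHom h ≫ G.map (eqToHom h') = 𝟙 (G.obj a) := by
  subst h'; simp

lemma auxComp {D D' E : Type*} [Category D] [Category D'] [Category E] (B : D ⥤ D') (R : D' ⥤ E)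
    (Q : D ⥤ E) {x0 : E} {a a' : D} {m z : D'} (φf : a ⟶ a') (ψf : B.obj a' ⟶ z)
    (e1 : x0 = R.obj m) (e2 : m = B.obj a) (e3 : x0 = Q.obj a) (e4 : Q.obj a = (B ⋙ R).obj a)
    (e5 : (B ⋙ R).obj a' = Q.obj a') (e6 : Q.obj a' = R.obj (B.obj a')) :
    eqToHom e1 ≫ R.map (eqToHom e2 ≫ B.map φf ≫ ψf) =
      eqToHom e3 ≫ (eqToHom e4 ≫ (B ⋙ R).map φf ≫ eqToHom e5) ≫ eqToHom e6 ≫ R.map ψf := by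
  subst e2; simp

lemma auxNat {D E : Type*} [Category D] [Category E] (G Q : D ⥤ E) (hGQ : G = Q) {x0 m z : E}
    {a a' : D} (φf : a ⟶ a') (gf : G.obj a' ⟶ z) (e1 : x0 = m) (e2 : m = G.obj a)
    (e3 : x0 = Q.obj a) (e4 : Q.obj a' = G.obj a') :
    eqToHom e1 ≫ eqToHom e2 ≫ G.map φf ≫ gf = eqToHom e3 ≫ Q.map φf ≫ eqToHom e4 ≫ gf := by
  subst hGQ; simp

lemma auxId2 {E : Type*} [Category E] (G : E ⥤ E) (hG : G = 𝟭 E) {x0 a b d : E} (g : a ⟶ b)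
    (h : b ⟶ d) (e1 : x0 = a) (e2 : x0 = G.obj a) (e3 : G.obj b = b) :
    eqToHom e1 ≫ g ≫ h = eqToHom e2 ≫ G.map g ≫ eqToHom e3 ≫ h := by
  subst hG; simp

lemma auxRefl {E : Type*} [Category E] {a b : E} (h : a = a) (g : a ⟶ b) : eqToHom h ≫ g = g := by
  simp

lemma auxTwo {E : Type*} [Category E] {a b d : E} (h1 : a = b) (h2 : b = a) (g : a ⟶ d) :
    eqToHom h1 ≫ eqToHom h2 ≫ g = g := by
  simp

def Lfun : CostructuredArrow (Grothendieck.forget F) c ⥤ F.obj c where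
  obj p := (F.map p.hom).toFunctor.obj p.left.fiber
  map {p q} φ := eqToHom (by exact Functor.congr_obj (congrArg Cat.Hom.toFunctor ((congrArg F.map (baseEq F c φ).symm).trans (F.map_comp _ _))) p.left.fiber) ≫ (F.map q.hom).toFunctor.map φ.left.fiber
  map_id p := by
    dsimp
    exact auxId _ _ _
  map_comp {p q r} φ ψ := by
    dsimp
    simp only [Grothendieck.comp_fiber, Functor.map_comp, eqToHom_map, Category.assoc]
    have h : (F.map q.hom).toFunctor = (F.map ψ.left.base).toFunctor ⋙ (F.map r.hom).toFunctor := by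
      exact congrArg Cat.Hom.toFunctor ((congrArg F.map (baseEq F c ψ).symm).trans (F.map_comp _ _))
    rw [Functor.congr_hom h φ.left.fiber]
    exact auxComp (F.map ψ.left.base).toFunctor (F.map r.hom).toFunctor (F.map q.hom).toFunctor _ _ _ _ _ _ _ _

def adj : Lfun F c ⊣ jFiber F c :=
  Adjunction.mkOfHomEquiv
    { homEquiv := fun p x =>
        { toFun := fun g => CostructuredArrow.homMk (Grothendieck.Hom.mk p.hom g) (by exact Category.comp_id _)
          invFun := fun φ => eqToHom (by
              exact congrArg (fun f => (F.map f).toFunctor.obj p.left.fiber) ((baseEq F c φ).symm.trans (Category.comp_id φ.left.base))) ≫ φ.left.fiber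
          left_inv := fun g => by exact auxRefl _ g
          right_inv := fun φ => by
            apply CostructuredArrow.hom_ext
            apply Grothendieck.ext
            · exact auxTwo _ _ _
            · have := baseEq F c φ
              simp [jFiber, CostructuredArrow.mk_hom_eq_self] at this
              exact (baseEq F c φ).symm.trans (Category.comp_id φ.left.base) }
      homEquiv_naturality_left_symm := by
        intro p q x φ g
        have hb : g.left.base = q.hom := by have := baseEq F c g; exact (Category.comp_id _).symm.trans this
        dsimp [Lfun]
        simp only [CostructuredArrow.comp_left, Grothendieck.comp_fiber, Functor.map_comp,
          eqToHom_map, Category.assoc]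
        have h : (F.map g.left.base).toFunctor = (F.map q.hom).toFunctor := by rw [hb]; rfl
        exact auxNat _ _ h _ _ _ _ _ _
      homEquiv_naturality_right := by
        intro p x y g h
        apply CostructuredArrow.hom_ext
        apply Grothendieck.ext _ _ (by exact (Category.comp_id _).symm)
        dsimp [jFiber]
        exact auxId2 _ (congrArg Cat.Hom.toFunctor (F.map_id c)) _ _ _ _ _ }


/-- For the Grothendieck construction `π : ∫F ⥤ C` of a functor `F : C ⥤ Cat` and an object
`c` of `C`: (a) the canonical functor `j_c : F(c) ⥤ (π ↓ c)` admits a left adjoint, sending a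
pair `(e, f : π(e) ⟶ c)` to the pushforward `(F.map f).obj e.fiber`, and in particular `j_c`
is a final functor; and (b) for every ring `R` and every `E : ∫F ⥤ Mod_R`, the canonical
morphism from the colimit of `ι_c ⋙ E` over the fiber `F(c)` to the colimit over the comma
category `(π ↓ c)` — i.e. to the value at `c` of the pointwise left Kan extension of `E`
along `π` — is an isomorphism. -/
theorem jFiber_adjoint_final_and_colimit_iso (c : C) :
    (∃ L : CostructuredArrow (Grothendieck.forget F) c ⥤ F.obj c,
        (∀ p : CostructuredArrow (Grothendieck.forget F) c,
          L.obj p = (F.map p.hom).toFunctor.obj p.left.fiber) ∧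
        Nonempty (L ⊣ jFiber F c)) ∧
    (jFiber F c).Final ∧
    (jFiber F c ⋙ CostructuredArrow.proj (Grothendieck.forget F) c = Grothendieck.ι F c) ∧
    (∀ (R : Type u) [Ring R] (E : Grothendieck F ⥤ ModuleCat.{u} R),
      IsIso (colimit.pre (CostructuredArrow.proj (Grothendieck.forget F) c ⋙ E)
        (jFiber F c))) := by
  have hfin : (jFiber F c).Final := Functor.final_of_adjunction (adj F c)
  refine ⟨⟨Lfun F c, fun p => rfl, ⟨adj F c⟩⟩, hfin, rfl, ?_⟩
  intro R _ E
  infer_instance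

end Stmt12
end

section
/- Let G be a group and (S_i)_{i ∈ ℕ} a family of admissible G-sets such that for every finite-index subgroup H ≤ G the fixed-point set (S_i)^H is empty for all but finitely many i. Then the disjoint union ⨆_{i ∈ ℕ} S_i is an admissible G-set. -/
namespace Stmt13

/-- A `G`-set `S` is *admissible* if the stabilizer of every point has finite index in `G`
and, for every finite-index subgroup `H ≤ G`, the `H`-fixed point set of `S` is finite. -/
def IsAdmissible (G : Type*) [Group G] (S : Type*) [MulAction G S] : Prop :=
  (∀ s : S, (MulAction.stabilizer G s).FiniteIndex) ∧
    ∀ H : Subgroup G, H.FiniteIndex → {s : S | ∀ h ∈ H, h • s = s}.Finite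

/-- The componentwise action of `G` on the disjoint union of a family of `G`-sets. -/
instance sigmaMulAction (G : Type*) [Group G] (S : ℕ → Type*) [∀ i, MulAction G (S i)] :
    MulAction G ((i : ℕ) × S i) where
  smul g x := ⟨x.1, g • x.2⟩
  one_smul x := by
    cases x with
    | mk i y => exact congrArg (Sigma.mk i) (one_smul G y)
  mul_smul g g' x := by
    cases x with
    | mk i y => exact congrArg (Sigma.mk i) (mul_smul g g' y)

/-- If `(S i)` is a family of admissible `G`-sets such that for every finite-index subgroup
`H ≤ G` the `H`-fixed point set of `S i` is empty for all but finitely many `i`, then the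
disjoint union `Σ i, S i` is an admissible `G`-set. -/
theorem isAdmissible_sigma (G : Type*) [Group G] (S : ℕ → Type*) [∀ i, MulAction G (S i)]
    (hadm : ∀ i, IsAdmissible G (S i))
    (hfin : ∀ H : Subgroup G, H.FiniteIndex →
      {i : ℕ | ∃ s : S i, ∀ h ∈ H, h • s = s}.Finite) :
    IsAdmissible G ((i : ℕ) × S i) := by
  have hsmul : ∀ (g : G) (i : ℕ) (s : S i), g • (⟨i, s⟩ : (i : ℕ) × S i) = ⟨i, g • s⟩ :=
    fun _ _ _ => rfl
  constructor
  · rintro ⟨i, s⟩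
    have h := (hadm i).1 s
    have : MulAction.stabilizer G (⟨i, s⟩ : (i : ℕ) × S i) = MulAction.stabilizer G s := by
      ext g
      simp only [MulAction.mem_stabilizer_iff, hsmul, Sigma.mk.inj_iff, heq_eq_eq, true_and]
      change (⟨i, g • s⟩ : (i : ℕ) × S i) = ⟨i, s⟩ ↔ g • s = s; exact ⟨fun h => eq_of_heq (Sigma.mk.inj_iff.mp h).2, fun h => by rw [h]⟩
    rw [this]; exact h
  · intro H hH
    have hsub : {x : (i : ℕ) × S i | ∀ h ∈ H, h • x = x} ⊆
        ⋃ i ∈ {i : ℕ | ∃ s : S i, ∀ h ∈ H, h • s = s},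
          Sigma.mk i '' {s : S i | ∀ h ∈ H, h • s = s} := by
      rintro ⟨i, s⟩ hx
      have hs : ∀ h ∈ H, h • s = s := by
        intro h hh
        have := hx h hh
        rw [hsmul] at this
        exact eq_of_heq (Sigma.mk.inj_iff.mp this).2
      exact Set.mem_biUnion ⟨s, hs⟩ ⟨s, hs, rfl⟩
    exact Set.Finite.subset
      (Set.Finite.biUnion (hfin H hH) fun i _ => ((hadm i).2 H hH).image _) hsub

end Stmt13
end

section
/- On the abelian group A = ∏_{n ≥ 1} ℤ of sequences (a_n)_{n ≥ 1} of integers, define a multiplication by (a · b)_n = Σ_{(i,j) : lcm(i,j) = n} gcd(i, j) · a_i · b_j, where the sum runs over all pairs of positive integers (i, j) with lcm(i, j) = n (a finite sum, since i and j divide n). Then this multiplication makes A a commutative, associative, unital ring, with unit the sequence e given by e_1 = 1 and e_n = 0 for n > 1. Moreover, for the basis elements ε_i (the sequence with 1 in position i and 0 elsewhere) one has ε_i · ε_j = gcd(i, j) · ε_{lcm(i,j)}, and the triple product satisfies ε_i · ε_j · ε_k = (ijk / lcm(i,j,k)) · ε_{lcm(i,j,k)}. -/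
namespace Stmt15

def extByZero (a : ℕ+ → ℤ) : ℕ → ℤ := fun n => if h : 0 < n then a ⟨n, h⟩ else 0

def burnsideMul (a b : ℕ+ → ℤ) : ℕ+ → ℤ := fun n =>
  ∑ p ∈ ((n : ℕ).divisors ×ˢ (n : ℕ).divisors).filter
      (fun p => Nat.lcm p.1 p.2 = (n : ℕ)),
    (Nat.gcd p.1 p.2 : ℤ) * extByZero a p.1 * extByZero b p.2

def burnsideOne : ℕ+ → ℤ := fun n => if n = 1 then 1 else 0

def eps (i : ℕ+) : ℕ+ → ℤ := fun n => if n = i then 1 else 0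

lemma ext_pos (a : ℕ+ → ℤ) (k : ℕ) (h : 0 < k) : extByZero a k = a ⟨k, h⟩ := dif_pos h

lemma ext_coe (a : ℕ+ → ℤ) (n : ℕ+) : extByZero a (n : ℕ) = a n := ext_pos a _ n.pos

lemma ext_eps (i : ℕ+) (k : ℕ) : extByZero (eps i) k = if k = (i : ℕ) then 1 else 0 := by
  unfold extByZero eps
  split
  · rename_i h
    by_cases hk : k = (i : ℕ)
    · rw [if_pos hk]; exact if_pos (PNat.eq (m := (⟨k, h⟩ : ℕ+)) (n := i) hk)
    · rw [if_neg hk]; exact if_neg (fun (e : (⟨k, h⟩ : ℕ+) = i) => hk (congrArg PNat.val e))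
  · rename_i h
    have hk : k = 0 := Nat.eq_zero_of_not_pos h
    subst hk
    rw [if_neg (fun e => i.pos.ne' e.symm)]

lemma ext_add (a b : ℕ+ → ℤ) (k : ℕ) :
    extByZero (a + b) k = extByZero a k + extByZero b k := by
  unfold extByZero; split
  · rfl
  · simp

lemma ext_smul (z : ℤ) (a : ℕ+ → ℤ) (k : ℕ) :
    extByZero (z • a) k = z * extByZero a k := by
  unfold extByZero; split
  · rfl
  · simp

lemma mul_apply (a b : ℕ+ → ℤ) (n : ℕ+) :
    burnsideMul a b n = ∑ i ∈ (n : ℕ).divisors, ∑ j ∈ (n : ℕ).divisors,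
      if Nat.lcm i j = (n : ℕ) then (Nat.gcd i j : ℤ) * extByZero a i * extByZero b j
      else 0 := by
  rw [burnsideMul, Finset.sum_filter, Finset.sum_product]

lemma mul_comm' (a b : ℕ+ → ℤ) : burnsideMul a b = burnsideMul b a := by
  funext n
  rw [mul_apply, mul_apply, Finset.sum_comm]
  refine Finset.sum_congr rfl fun i _ => Finset.sum_congr rfl fun j _ => ?_
  rw [Nat.lcm_comm j i, Nat.gcd_comm j i]
  by_cases h : Nat.lcm i j = (n : ℕ) <;> simp [h] <;> ring

lemma mul_add_left (a b c : ℕ+ → ℤ) :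
    burnsideMul (a + b) c = burnsideMul a c + burnsideMul b c := by
  funext n
  rw [Pi.add_apply, mul_apply, mul_apply, mul_apply, ← Finset.sum_add_distrib]
  refine Finset.sum_congr rfl fun i _ => ?_
  rw [← Finset.sum_add_distrib]
  refine Finset.sum_congr rfl fun j _ => ?_
  by_cases h : Nat.lcm i j = (n : ℕ) <;> simp [h, ext_add] <;> ring

lemma mul_smul_left (z : ℤ) (a b : ℕ+ → ℤ) :
    burnsideMul (z • a) b = z • burnsideMul a b := by
  funext n
  rw [Pi.smul_apply, smul_eq_mul, mul_apply, mul_apply, Finset.mul_sum]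
  refine Finset.sum_congr rfl fun i _ => ?_
  rw [Finset.mul_sum]
  refine Finset.sum_congr rfl fun j _ => ?_
  by_cases h : Nat.lcm i j = (n : ℕ)
  · rw [if_pos h, if_pos h, ext_smul]; ring
  · rw [if_neg h, if_neg h, mul_zero]

lemma one_mul' (a : ℕ+ → ℤ) : burnsideMul burnsideOne a = a := by
  funext n
  have hne : (n : ℕ) ≠ 0 := n.pos.ne'
  have hone : burnsideOne = eps 1 := rfl
  rw [mul_apply, Finset.sum_eq_single 1]
  · have : ∀ j ∈ (n : ℕ).divisors,
        (if Nat.lcm 1 j = (n : ℕ) then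
          (Nat.gcd 1 j : ℤ) * extByZero burnsideOne 1 * extByZero a j else 0)
        = if j = (n : ℕ) then extByZero a j else 0 := by
      intro j _
      rw [hone, ext_eps]
      simp [Nat.lcm_one_left, Nat.gcd_one_left, eq_comm]
    rw [Finset.sum_congr rfl this, Finset.sum_ite_eq' _ (n : ℕ),
      if_pos (Nat.mem_divisors_self _ hne), ext_coe]
  · intro i _ hi1
    refine Finset.sum_eq_zero fun j _ => ?_
    rw [hone, ext_eps]
    simp [hi1]
  · intro h1
    exact absurd (Nat.one_mem_divisors.mpr hne) h1

lemma eps_mul (i j : ℕ+) :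
    burnsideMul (eps i) (eps j) = (Nat.gcd i j : ℤ) • eps (PNat.lcm i j) := by
  funext n
  rw [Pi.smul_apply, smul_eq_mul]
  have hcond : (n = PNat.lcm i j) ↔ (Nat.lcm (i : ℕ) (j : ℕ) = (n : ℕ)) := by
    rw [← PNat.coe_inj, PNat.lcm_coe, eq_comm]
  rw [burnsideMul]
  by_cases h : Nat.lcm (i : ℕ) (j : ℕ) = (n : ℕ)
  · have hmem : ((i : ℕ), (j : ℕ)) ∈
        (((n : ℕ)).divisors ×ˢ ((n : ℕ)).divisors).filter
          (fun p => Nat.lcm p.1 p.2 = (n : ℕ)) := by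
      simp only [Finset.mem_filter, Finset.mem_product, Nat.mem_divisors]
      exact ⟨⟨⟨h ▸ Nat.dvd_lcm_left _ _, n.pos.ne'⟩, ⟨h ▸ Nat.dvd_lcm_right _ _, n.pos.ne'⟩⟩, h⟩
    rw [Finset.sum_eq_single ((i : ℕ), (j : ℕ))]
    · rw [eps, if_pos (hcond.mpr h), mul_one]
      simp [ext_eps]
    · intro p _ hpne
      by_cases h1 : p.1 = (i : ℕ) <;> by_cases h2 : p.2 = (j : ℕ)
      · exact absurd (Prod.ext h1 h2) hpne
      all_goals simp [ext_eps, h1, h2]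
    · intro habs; exact absurd hmem habs
  · rw [eps, if_neg (fun e => h (hcond.mp e)), mul_zero]
    refine Finset.sum_eq_zero fun p hp => ?_
    have hl : Nat.lcm p.1 p.2 = (n : ℕ) := (Finset.mem_filter.mp hp).2
    by_cases h1 : p.1 = (i : ℕ) <;> by_cases h2 : p.2 = (j : ℕ)
    · exact absurd (by rw [← h1, ← h2]; exact hl) h
    all_goals simp [ext_eps, h1, h2]

section assoc

variable (a b c : ℕ+ → ℤ) (n : ℕ+)

lemma expand_ab (m : ℕ) (hm : m ∈ (n : ℕ).divisors) :
    extByZero (burnsideMul a b) m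
      = ∑ i ∈ (n : ℕ).divisors, ∑ j ∈ (n : ℕ).divisors,
          if Nat.lcm i j = m then
            (Nat.gcd i j : ℤ) * extByZero a i * extByZero b j else 0 := by
  have hne : (n : ℕ) ≠ 0 := n.pos.ne'
  have hmpos : 0 < m := Nat.pos_of_mem_divisors hm
  have hsub : m.divisors ⊆ (n : ℕ).divisors :=
    Nat.divisors_subset_of_dvd hne (Nat.mem_divisors.mp hm).1
  have h1 : extByZero (burnsideMul a b) m
      = ∑ i ∈ m.divisors, ∑ j ∈ m.divisors,
          if Nat.lcm i j = m then
            (Nat.gcd i j : ℤ) * extByZero a i * extByZero b j else 0 := by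
    rw [ext_pos _ m hmpos]
    exact mul_apply a b ⟨m, hmpos⟩
  rw [h1]
  rw [Finset.sum_congr rfl (fun i (_ : i ∈ m.divisors) =>
    Finset.sum_subset hsub (fun j _ hjm =>
      if_neg (fun (hl : Nat.lcm i j = m) => hjm (Nat.mem_divisors.mpr ⟨hl ▸ Nat.dvd_lcm_right i j, hmpos.ne'⟩))))]
  exact Finset.sum_subset hsub (fun x _ hxm => Finset.sum_eq_zero fun y _ =>
    if_neg (fun (hl : Nat.lcm x y = m) => hxm (Nat.mem_divisors.mpr ⟨hl ▸ Nat.dvd_lcm_left x y, hmpos.ne'⟩)))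

lemma left_expand :
    burnsideMul (burnsideMul a b) c n
      = ∑ i ∈ (n : ℕ).divisors, ∑ j ∈ (n : ℕ).divisors, ∑ k ∈ (n : ℕ).divisors,
          if Nat.lcm (Nat.lcm i j) k = (n : ℕ) then
            (((i * j * k) / (n : ℕ) : ℕ) : ℤ)
              * (extByZero a i * extByZero b j * extByZero c k)
          else 0 := by
  have hne : (n : ℕ) ≠ 0 := n.pos.ne'
  rw [mul_apply]
  have step1 : ∀ m ∈ (n : ℕ).divisors, ∀ k,
      (if Nat.lcm m k = (n : ℕ) then
        (Nat.gcd m k : ℤ) * extByZero (burnsideMul a b) m * extByZero c k else 0)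
      = ∑ i ∈ (n : ℕ).divisors, ∑ j ∈ (n : ℕ).divisors,
          if Nat.lcm i j = m ∧ Nat.lcm m k = (n : ℕ) then
            ((Nat.gcd m k * Nat.gcd i j : ℕ) : ℤ)
              * (extByZero a i * extByZero b j * extByZero c k)
          else 0 := by
    intro m hm k
    by_cases h : Nat.lcm m k = (n : ℕ)
    · rw [if_pos h, expand_ab a b n m hm, Finset.mul_sum, Finset.sum_mul]
      refine Finset.sum_congr rfl fun i _ => ?_
      rw [Finset.mul_sum, Finset.sum_mul]
      refine Finset.sum_congr rfl fun j _ => ?_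
      by_cases h2 : Nat.lcm i j = m
      · rw [if_pos h2, if_pos ⟨h2, h⟩]; push_cast; ring
      · rw [if_neg h2, if_neg (fun hc => h2 hc.1)]; ring
    · rw [if_neg h]
      exact (Finset.sum_eq_zero fun i _ => Finset.sum_eq_zero fun j _ =>
        if_neg (fun hc => h hc.2)).symm
  rw [Finset.sum_congr rfl (fun m hm => Finset.sum_congr rfl fun k _ => step1 m hm k)]
  rw [Finset.sum_comm]
  conv_lhs => enter [2, k]; rw [Finset.sum_comm]
  conv_lhs => enter [2, k, 2, i]; rw [Finset.sum_comm]
  have collapse : ∀ k i j : ℕ,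
      (∑ m ∈ (n : ℕ).divisors,
        if Nat.lcm i j = m ∧ Nat.lcm m k = (n : ℕ) then
          ((Nat.gcd m k * Nat.gcd i j : ℕ) : ℤ)
            * (extByZero a i * extByZero b j * extByZero c k)
        else 0)
      = if Nat.lcm (Nat.lcm i j) k = (n : ℕ) then
          (((i * j * k) / (n : ℕ) : ℕ) : ℤ)
            * (extByZero a i * extByZero b j * extByZero c k)
        else 0 := by
    intro k i j
    have hstep : ∀ m ∈ (n : ℕ).divisors,
        (if Nat.lcm i j = m ∧ Nat.lcm m k = (n : ℕ) then
          ((Nat.gcd m k * Nat.gcd i j : ℕ) : ℤ)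
            * (extByZero a i * extByZero b j * extByZero c k)
        else 0)
        = if m = Nat.lcm i j then
            (if Nat.lcm m k = (n : ℕ) then
              ((Nat.gcd m k * Nat.gcd i j : ℕ) : ℤ)
                * (extByZero a i * extByZero b j * extByZero c k)
            else 0)
          else 0 := by
      intro m _
      by_cases h1 : m = Nat.lcm i j
      · subst h1; simp
      · rw [if_neg h1, if_neg (fun hc => h1 hc.1.symm)]
    rw [Finset.sum_congr rfl hstep, Finset.sum_ite_eq']
    by_cases h : Nat.lcm (Nat.lcm i j) k = (n : ℕ)
    · have hmem : Nat.lcm i j ∈ (n : ℕ).divisors :=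
        Nat.mem_divisors.mpr ⟨h ▸ Nat.dvd_lcm_left _ _, hne⟩
      rw [if_pos hmem, if_pos h, if_pos h]
      congr 2
      have key : i * j * k
          = (Nat.gcd (Nat.lcm i j) k * Nat.gcd i j) * (n : ℕ) := by
        rw [← h]
        calc i * j * k = (Nat.gcd i j * Nat.lcm i j) * k := by rw [Nat.gcd_mul_lcm]
          _ = Nat.gcd i j * (Nat.gcd (Nat.lcm i j) k * Nat.lcm (Nat.lcm i j) k) := by
              rw [Nat.gcd_mul_lcm (Nat.lcm i j) k]; ring
          _ = (Nat.gcd (Nat.lcm i j) k * Nat.gcd i j) * Nat.lcm (Nat.lcm i j) k := by ring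
      exact (Nat.div_eq_of_eq_mul_left n.pos key).symm
    · simp [h]
  rw [Finset.sum_congr rfl (fun k _ => Finset.sum_congr rfl fun i _ =>
    Finset.sum_congr rfl fun j _ => collapse k i j)]
  rw [Finset.sum_comm]
  conv_lhs => enter [2, i]; rw [Finset.sum_comm]

lemma right_expand :
    burnsideMul a (burnsideMul b c) n
      = ∑ i ∈ (n : ℕ).divisors, ∑ j ∈ (n : ℕ).divisors, ∑ k ∈ (n : ℕ).divisors,
          if Nat.lcm (Nat.lcm i j) k = (n : ℕ) then
            (((i * j * k) / (n : ℕ) : ℕ) : ℤ)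
              * (extByZero a i * extByZero b j * extByZero c k)
          else 0 := by
  have hne : (n : ℕ) ≠ 0 := n.pos.ne'
  rw [mul_apply]
  have step1 : ∀ i, ∀ m ∈ (n : ℕ).divisors,
      (if Nat.lcm i m = (n : ℕ) then
        (Nat.gcd i m : ℤ) * extByZero a i * extByZero (burnsideMul b c) m else 0)
      = ∑ j ∈ (n : ℕ).divisors, ∑ k ∈ (n : ℕ).divisors,
          if Nat.lcm j k = m ∧ Nat.lcm i m = (n : ℕ) then
            ((Nat.gcd i m * Nat.gcd j k : ℕ) : ℤ)
              * (extByZero a i * extByZero b j * extByZero c k)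
          else 0 := by
    intro i m hm
    by_cases h : Nat.lcm i m = (n : ℕ)
    · rw [if_pos h, expand_ab b c n m hm, Finset.mul_sum]
      refine Finset.sum_congr rfl fun j _ => ?_
      rw [Finset.mul_sum]
      refine Finset.sum_congr rfl fun k _ => ?_
      by_cases h2 : Nat.lcm j k = m
      · rw [if_pos h2, if_pos ⟨h2, h⟩]; push_cast; ring
      · rw [if_neg h2, if_neg (fun hc => h2 hc.1)]; ring
    · rw [if_neg h]
      exact (Finset.sum_eq_zero fun j _ => Finset.sum_eq_zero fun k _ =>
        if_neg (fun hc => h hc.2)).symm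
  rw [Finset.sum_congr rfl (fun i _ => Finset.sum_congr rfl fun m hm => step1 i m hm)]
  conv_lhs => enter [2, i]; rw [Finset.sum_comm]
  conv_lhs => enter [2, i, 2, j]; rw [Finset.sum_comm]
  refine Finset.sum_congr rfl fun i _ => Finset.sum_congr rfl fun j _ =>
    Finset.sum_congr rfl fun k _ => ?_
  have hstep : ∀ m ∈ (n : ℕ).divisors,
      (if Nat.lcm j k = m ∧ Nat.lcm i m = (n : ℕ) then
        ((Nat.gcd i m * Nat.gcd j k : ℕ) : ℤ)
          * (extByZero a i * extByZero b j * extByZero c k)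
      else 0)
      = if m = Nat.lcm j k then
          (if Nat.lcm i m = (n : ℕ) then
            ((Nat.gcd i m * Nat.gcd j k : ℕ) : ℤ)
              * (extByZero a i * extByZero b j * extByZero c k)
          else 0)
        else 0 := by
    intro m _
    by_cases h1 : m = Nat.lcm j k
    · subst h1; simp
    · rw [if_neg h1, if_neg (fun hc => h1 hc.1.symm)]
  rw [Finset.sum_congr rfl hstep, Finset.sum_ite_eq']
  rw [← Nat.lcm_assoc]
  by_cases h : Nat.lcm (Nat.lcm i j) k = (n : ℕ)
  · have h' : Nat.lcm i (Nat.lcm j k) = (n : ℕ) := by rw [← Nat.lcm_assoc]; exact h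
    have hmem : Nat.lcm j k ∈ (n : ℕ).divisors :=
      Nat.mem_divisors.mpr ⟨h' ▸ Nat.dvd_lcm_right _ _, hne⟩
    rw [if_pos hmem, if_pos h, if_pos h]
    congr 2
    have key : i * j * k
        = (Nat.gcd i (Nat.lcm j k) * Nat.gcd j k) * (n : ℕ) := by
      rw [← h']
      calc i * j * k = i * (Nat.gcd j k * Nat.lcm j k) := by rw [Nat.gcd_mul_lcm]; ring
        _ = Nat.gcd j k * (Nat.gcd i (Nat.lcm j k) * Nat.lcm i (Nat.lcm j k)) := by
            rw [Nat.gcd_mul_lcm i (Nat.lcm j k)]; ring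
        _ = (Nat.gcd i (Nat.lcm j k) * Nat.gcd j k) * Nat.lcm i (Nat.lcm j k) := by ring
    exact (Nat.div_eq_of_eq_mul_left n.pos key).symm
  · simp [h]

end assoc

lemma eps_triple (i j k : ℕ+) :
    burnsideMul (burnsideMul (eps i) (eps j)) (eps k)
      = (((i : ℕ) * (j : ℕ) * (k : ℕ) / Nat.lcm i (Nat.lcm j k) : ℕ) : ℤ) •
          eps (PNat.lcm i (PNat.lcm j k)) := by
  rw [eps_mul, mul_smul_left, eps_mul, smul_smul]
  have hL : PNat.lcm (PNat.lcm i j) k = PNat.lcm i (PNat.lcm j k) := by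
    rw [← PNat.coe_inj]
    simp [PNat.lcm_coe, Nat.lcm_assoc]
  rw [hL]
  congr 1
  rw [PNat.lcm_coe, ← Nat.cast_mul]
  congr 1
  have hpos : 0 < Nat.lcm (i : ℕ) (Nat.lcm (j : ℕ) (k : ℕ)) :=
    Nat.pos_of_ne_zero (Nat.lcm_ne_zero i.pos.ne'
      (Nat.lcm_ne_zero j.pos.ne' k.pos.ne'))
  have key : (i : ℕ) * (j : ℕ) * (k : ℕ)
      = (Nat.gcd (i : ℕ) (j : ℕ) * Nat.gcd (Nat.lcm (i : ℕ) (j : ℕ)) (k : ℕ))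
          * Nat.lcm (i : ℕ) (Nat.lcm (j : ℕ) (k : ℕ)) := by
    rw [← Nat.lcm_assoc]
    calc (i : ℕ) * (j : ℕ) * (k : ℕ)
        = (Nat.gcd (i : ℕ) (j : ℕ) * Nat.lcm (i : ℕ) (j : ℕ)) * (k : ℕ) := by
          rw [Nat.gcd_mul_lcm]
      _ = Nat.gcd (i : ℕ) (j : ℕ)
            * (Nat.gcd (Nat.lcm (i : ℕ) (j : ℕ)) (k : ℕ)
                * Nat.lcm (Nat.lcm (i : ℕ) (j : ℕ)) (k : ℕ)) := by
          rw [Nat.gcd_mul_lcm (Nat.lcm (i : ℕ) (j : ℕ)) (k : ℕ)]; ring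
      _ = (Nat.gcd (i : ℕ) (j : ℕ) * Nat.gcd (Nat.lcm (i : ℕ) (j : ℕ)) (k : ℕ))
            * Nat.lcm (Nat.lcm (i : ℕ) (j : ℕ)) (k : ℕ) := by ring
  exact (Nat.div_eq_of_eq_mul_left hpos key).symm

/-- The multiplication `(a · b)_n = Σ_{lcm(i,j)=n} gcd(i,j) a_i b_j` makes the group
`∏_{n ≥ 1} ℤ` (with pointwise addition) into a commutative, associative, unital ring with
unit `e = ε₁`; moreover `ε_i · ε_j = gcd(i,j) · ε_{lcm(i,j)}` and
`ε_i · ε_j · ε_k = (ijk / lcm(i,j,k)) · ε_{lcm(i,j,k)}`. -/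
theorem burnside_ring_structure :
    (∀ a b, burnsideMul a b = burnsideMul b a) ∧
    (∀ a b c, burnsideMul (burnsideMul a b) c = burnsideMul a (burnsideMul b c)) ∧
    (∀ a, burnsideMul burnsideOne a = a) ∧
    (∀ a, burnsideMul a burnsideOne = a) ∧
    (∀ a b c, burnsideMul (a + b) c = burnsideMul a c + burnsideMul b c) ∧
    (∀ a b c, burnsideMul a (b + c) = burnsideMul a b + burnsideMul a c) ∧
    (∀ i j : ℕ+, burnsideMul (eps i) (eps j)
      = (Nat.gcd i j : ℤ) • eps (PNat.lcm i j)) ∧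
    (∀ i j k : ℕ+, burnsideMul (burnsideMul (eps i) (eps j)) (eps k)
      = (((i : ℕ) * (j : ℕ) * (k : ℕ) / Nat.lcm i (Nat.lcm j k) : ℕ) : ℤ) •
          eps (PNat.lcm i (PNat.lcm j k))) := by
  refine ⟨mul_comm', fun a b c => ?_, one_mul',
    fun a => (mul_comm' a _).trans (one_mul' a), mul_add_left,
    fun a b c => by rw [mul_comm' a (b + c), mul_add_left, mul_comm' b a, mul_comm' c a],
    eps_mul, eps_triple⟩
  funext n
  rw [left_expand, right_expand]

end Stmt15
end
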